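/- Let G=(V,E) be a finite simple undirected graph, fix a positive integer T, and let A ⊆ V be a set of vertices with μ(A) ≤ (2/3)·μ(V) and φ(A) ≤ 1/(100·T). Then there exists a subset A_T ⊆ A with μ(A_T) ≥ μ(A)/2 such that for every x ∈ A_T, with probability at least 7/9, a sample path (S₀, S₁, …, S_T) from the volume-biased evolving set process started from S₀ = {x} satisfies all of: (1) φ(S_t) < 3·θ_T for some t ∈ {0,…,T}, where θ_T = √(4 T^{-1} log μ(V)); (2) μ(S_j) ≤ (3/4)·μ(V) for all j ∈ {0,…,T}; and (3) μ(S_j ∩ A) ≥ (9/10)·μ(S_j) for all j ∈ {0,…,T}. -/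

import Mathlib

open scoped Classical symmDiff

noncomputable section

variable {V : Type*} [Fintype V] [DecidableEq V]

/-- The volume `μ(S)` of a set of vertices: the sum of the degrees. -/
def vol (G : SimpleGraph V) [DecidableRel G.Adj] (S : Finset V) : ℝ :=
  ∑ x ∈ S, (G.degree x : ℝ)

/-- The number of edges leaving `S`, i.e. `∂(S) = e(S, Sᶜ)`. -/
def bdry (G : SimpleGraph V) [DecidableRel G.Adj] (S : Finset V) : ℝ :=
  ∑ x ∈ S, ((Sᶜ.filter (G.Adj x)).card : ℝ)

/-- The conductance `φ(S) = ∂(S)/μ(S)`. -/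
def phiCond (G : SimpleGraph V) [DecidableRel G.Adj] (S : Finset V) : ℝ :=
  bdry G S / vol G S

/-- The lazy random walk kernel `p(x,y)`: `1/2` if `x = y`, `1/(2 d(x))` if `x ~ y`,
and `0` otherwise. -/
def walkP (G : SimpleGraph V) [DecidableRel G.Adj] (x y : V) : ℝ :=
  if x = y then 1/2 else if G.Adj x y then 1 / (2 * (G.degree x : ℝ)) else 0

/-- `p(x,S) = Σ_{y∈S} p(x,y)`. -/
def pset (G : SimpleGraph V) [DecidableRel G.Adj] (x : V) (S : Finset V) : ℝ :=
  ∑ y ∈ S, walkP G x y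

/-- One step of the evolving set process from `S` with threshold `u`:
`S₁ = {y : p(y,S) ≥ u}`. -/
def esStep (G : SimpleGraph V) [DecidableRel G.Adj] (S : Finset V) (u : ℝ) : Finset V :=
  Finset.univ.filter fun y => u ≤ pset G y S

/-- The ESP transition kernel `K(S,S')`: the probability, for a uniform threshold
`U ∈ [0,1]`, that `{y : p(y,S) ≥ U} = S'`. -/
def Kk (G : SimpleGraph V) [DecidableRel G.Adj] (S S' : Finset V) : ℝ :=
  (MeasureTheory.volume {u : ℝ | u ∈ Set.Icc (0:ℝ) 1 ∧ esStep G S u = S'}).toReal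

/-- The volume-biased ESP transition kernel `K̂(S,S') = (μ(S')/μ(S)) K(S,S')`. -/
def Khat (G : SimpleGraph V) [DecidableRel G.Adj] (S S' : Finset V) : ℝ :=
  vol G S' / vol G S * Kk G S S'

/-- Expectation of `f` over length-`(t+1)` sample paths `(S₀, …, S_t)` of the Markov
chain with transition kernel `κ` started at `S₀`. -/
def Epath (κ : Finset V → Finset V → ℝ) (S₀ : Finset V) (t : ℕ)
    (f : (Fin (t+1) → Finset V) → ℝ) : ℝ :=
  ∑ w : Fin (t+1) → Finset V,
    if w 0 = S₀ then (∏ j : Fin t, κ (w j.castSucc) (w j.succ)) * f w else 0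
namespace ESP

open Finset MeasureTheory Set

variable {G : SimpleGraph V} [DecidableRel G.Adj]

section Basics

lemma vol_nonneg (G : SimpleGraph V) [DecidableRel G.Adj] (S : Finset V) : 0 ≤ vol G S :=
  Finset.sum_nonneg fun _ _ => by positivity

lemma vol_empty (G : SimpleGraph V) [DecidableRel G.Adj] : vol G (∅ : Finset V) = 0 :=
  Finset.sum_empty

lemma vol_singleton (G : SimpleGraph V) [DecidableRel G.Adj] (x : V) :
    vol G {x} = (G.degree x : ℝ) := Finset.sum_singleton _ _

lemma vol_mono {S T : Finset V} (h : S ⊆ T) : vol G S ≤ vol G T :=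
  Finset.sum_le_sum_of_subset_of_nonneg h fun _ _ _ => by positivity

lemma vol_inter_add_sdiff (S A : Finset V) : vol G (S ∩ A) + vol G (S \ A) = vol G S := by
  unfold vol
  exact Finset.sum_inter_add_sum_sdiff S A _

lemma bdry_nonneg (G : SimpleGraph V) [DecidableRel G.Adj] (S : Finset V) : 0 ≤ bdry G S :=
  Finset.sum_nonneg fun _ _ => by positivity

lemma bdry_le_vol (G : SimpleGraph V) [DecidableRel G.Adj] (S : Finset V) :
    bdry G S ≤ vol G S := by
  refine Finset.sum_le_sum fun x _ => ?_
  have : (Sᶜ.filter (G.Adj x)).card ≤ G.degree x := by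
    rw [← SimpleGraph.card_neighborFinset_eq_degree]
    apply Finset.card_le_card
    intro y hy
    simp only [Finset.mem_filter] at hy
    simpa [SimpleGraph.mem_neighborFinset] using hy.2
  exact_mod_cast this

lemma phi_nonneg (G : SimpleGraph V) [DecidableRel G.Adj] (S : Finset V) : 0 ≤ phiCond G S :=
  div_nonneg (bdry_nonneg G S) (vol_nonneg G S)

lemma phi_le_one {S : Finset V} (h : 0 < vol G S) : phiCond G S ≤ 1 :=
  (div_le_one h).2 (bdry_le_vol G S)

lemma walkP_nonneg (G : SimpleGraph V) [DecidableRel G.Adj] (x y : V) : 0 ≤ walkP G x y := by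
  unfold walkP
  split <;> [norm_num; skip]
  split <;> positivity

lemma pset_nonneg (G : SimpleGraph V) [DecidableRel G.Adj] (x : V) (S : Finset V) :
    0 ≤ pset G x S :=
  Finset.sum_nonneg fun _ _ => walkP_nonneg G x _

lemma deg_mul_walkP (G : SimpleGraph V) [DecidableRel G.Adj] (y z : V) :
    (G.degree y : ℝ) * walkP G y z
      = (if G.Adj y z then (1:ℝ)/2 else 0) + (if z = y then (G.degree y : ℝ)/2 else 0) := by
  unfold walkP
  by_cases h : y = z
  · subst h
    simp [G.irrefl]
    ring
  · rw [if_neg h, if_neg (Ne.symm h), add_zero]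
    by_cases ha : G.Adj y z
    · rw [if_pos ha, if_pos ha]
      have hd : 0 < G.degree y := by
        rw [← SimpleGraph.card_neighborFinset_eq_degree]
        exact Finset.card_pos.2 ⟨z, by simpa [SimpleGraph.mem_neighborFinset] using ha⟩
      have hd' : (G.degree y : ℝ) ≠ 0 := by positivity
      field_simp
    · simp [ha]

lemma deg_mul_pset (G : SimpleGraph V) [DecidableRel G.Adj] (y : V) (S : Finset V) :
    (G.degree y : ℝ) * pset G y S
      = ((S.filter (G.Adj y)).card : ℝ)/2 + (if y ∈ S then (G.degree y : ℝ)/2 else 0) := by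
  unfold pset
  rw [Finset.mul_sum]
  rw [Finset.sum_congr rfl (fun z _ => deg_mul_walkP G y z), Finset.sum_add_distrib]
  congr 1
  · rw [Finset.sum_ite, Finset.sum_const_zero, add_zero, Finset.sum_const]
    simp [div_eq_mul_inv, mul_comm]
  · rw [Finset.sum_ite_eq' S y]

lemma deg_mul_pset_univ (G : SimpleGraph V) [DecidableRel G.Adj] (y : V) :
    (G.degree y : ℝ) * pset G y Finset.univ = (G.degree y : ℝ) := by
  rw [deg_mul_pset]
  have : Finset.univ.filter (G.Adj y) = G.neighborFinset y := by
    ext z; simp [SimpleGraph.mem_neighborFinset]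
  rw [this, SimpleGraph.card_neighborFinset_eq_degree, if_pos (Finset.mem_univ y)]
  ring

lemma half_le_pset_of_mem {y : V} {S : Finset V} (h : y ∈ S) : 1/2 ≤ pset G y S := by
  have h1 := Finset.single_le_sum (f := fun z => walkP G y z)
    (fun z _ => walkP_nonneg G y z) h
  have h2 : walkP G y y = 1/2 := by simp [walkP]
  unfold pset
  rw [← h2]
  exact h1

lemma pset_compl_add (y : V) (S : Finset V) :
    pset G y S + pset G y Sᶜ = pset G y Finset.univ :=
  Finset.sum_add_sum_compl S _

lemma pset_univ_le_one (G : SimpleGraph V) [DecidableRel G.Adj] (y : V) :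
    pset G y Finset.univ ≤ 1 := by
  by_cases hd : G.degree y = 0
  · unfold pset walkP
    have : ∀ z ∈ Finset.univ, (if y = z then (1:ℝ)/2 else if G.Adj y z then 1 / (2 * (G.degree y : ℝ)) else 0) = if y = z then (1:ℝ)/2 else 0 := by
      intro z _
      by_cases h : y = z
      · simp [h]
      · rw [if_neg h, if_neg h]
        have : ¬ G.Adj y z := by
          intro ha
          have hd' : 0 < G.degree y := by
            rw [← SimpleGraph.card_neighborFinset_eq_degree]
            exact Finset.card_pos.2 ⟨z, by simpa [SimpleGraph.mem_neighborFinset] using ha⟩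
          omega
        simp [this]
    rw [Finset.sum_congr rfl this, Finset.sum_ite_eq]
    simp; norm_num
  · have hd' : (0:ℝ) < G.degree y := by positivity
    have := deg_mul_pset_univ G y
    nlinarith [this]

lemma pset_le_one (G : SimpleGraph V) [DecidableRel G.Adj] (y : V) (S : Finset V) :
    pset G y S ≤ 1 := by
  calc pset G y S ≤ pset G y Finset.univ :=
        Finset.sum_le_sum_of_subset_of_nonneg (Finset.subset_univ S)
          (fun z _ _ => walkP_nonneg G y z)
    _ ≤ 1 := pset_univ_le_one G y

lemma pset_le_half_of_not_mem {y : V} {S : Finset V} (h : y ∉ S) : pset G y S ≤ 1/2 := by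
  have h1 : pset G y S + pset G y Sᶜ ≤ 1 := by
    rw [pset_compl_add]; exact pset_univ_le_one G y
  have h2 : 1/2 ≤ pset G y Sᶜ := half_le_pset_of_mem (Finset.mem_compl.2 h)
  linarith

lemma sum_deg_pset_compl_self (G : SimpleGraph V) [DecidableRel G.Adj] (S : Finset V) :
    ∑ y ∈ S, (G.degree y : ℝ) * pset G y Sᶜ = bdry G S / 2 := by
  unfold bdry
  rw [Finset.sum_div]
  refine Finset.sum_congr rfl fun y hy => ?_
  rw [deg_mul_pset, if_neg (by simp [Finset.mem_compl] at *; exact hy)]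
  simp

lemma sum_deg_pset_symm (G : SimpleGraph V) [DecidableRel G.Adj] (B S : Finset V) :
    ∑ y ∈ B, (G.degree y : ℝ) * pset G y S = ∑ z ∈ S, (G.degree z : ℝ) * pset G z B := by
  unfold pset
  have key : ∀ (y z : V), (G.degree y : ℝ) * walkP G y z = (G.degree z : ℝ) * walkP G z y := by
    intro y z
    rw [deg_mul_walkP, deg_mul_walkP]
    by_cases h : y = z
    · subst h; rfl
    · rw [if_neg h, if_neg (Ne.symm h)]
      congr 1
      simp [SimpleGraph.adj_comm]
  calc ∑ y ∈ B, (G.degree y : ℝ) * ∑ z ∈ S, walkP G y z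
      = ∑ y ∈ B, ∑ z ∈ S, (G.degree y : ℝ) * walkP G y z := by
        refine Finset.sum_congr rfl fun y _ => Finset.mul_sum _ _ _
    _ = ∑ z ∈ S, ∑ y ∈ B, (G.degree z : ℝ) * walkP G z y := by
        rw [Finset.sum_comm]
        exact Finset.sum_congr rfl fun z _ => Finset.sum_congr rfl fun y _ => key y z
    _ = ∑ z ∈ S, (G.degree z : ℝ) * ∑ y ∈ B, walkP G z y := by
        refine Finset.sum_congr rfl fun z _ => (Finset.mul_sum _ _ _).symm

lemma sum_deg_pset_compl (G : SimpleGraph V) [DecidableRel G.Adj] (S : Finset V) :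
    ∑ y ∈ Sᶜ, (G.degree y : ℝ) * pset G y S = bdry G S / 2 := by
  rw [sum_deg_pset_symm]
  exact sum_deg_pset_compl_self G S

lemma sum_deg_pset_self (G : SimpleGraph V) [DecidableRel G.Adj] (S : Finset V) :
    ∑ y ∈ S, (G.degree y : ℝ) * pset G y S = vol G S - bdry G S / 2 := by
  have h1 : ∀ y ∈ S, (G.degree y : ℝ) * pset G y S
      = (G.degree y : ℝ) - (G.degree y : ℝ) * pset G y Sᶜ := by
    intro y _
    have := pset_compl_add (G := G) y S
    have h2 := deg_mul_pset_univ G y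
    nlinarith [this]
  rw [Finset.sum_congr rfl h1, Finset.sum_sub_distrib, sum_deg_pset_compl_self]
  rfl

end Basics


section Kernels

open MeasureTheory

lemma mem_esStep_iff (G : SimpleGraph V) [DecidableRel G.Adj] {S : Finset V} {u : ℝ} {y : V} :
    y ∈ esStep G S u ↔ u ≤ pset G y S := by
  simp [esStep]

lemma esStep_eq_iff (G : SimpleGraph V) [DecidableRel G.Adj] {S S' : Finset V} {u : ℝ} :
    esStep G S u = S' ↔ ∀ y, (u ≤ pset G y S ↔ y ∈ S') := by
  rw [Finset.ext_iff]
  exact forall_congr' fun y => by rw [mem_esStep_iff]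

lemma esStep_set_eq (G : SimpleGraph V) [DecidableRel G.Adj] (S S' : Finset V) :
    {u : ℝ | esStep G S u = S'}
      = ⋂ y : V, (if y ∈ S' then Set.Iic (pset G y S) else Set.Ioi (pset G y S)) := by
  ext u
  simp only [Set.mem_setOf_eq, Set.mem_iInter, esStep_eq_iff]
  refine forall_congr' fun y => ?_
  by_cases h : y ∈ S'
  · simp [h]
  · simp [h, Set.mem_Ioi, ← not_le]

lemma measurableSet_esStep_eq (G : SimpleGraph V) [DecidableRel G.Adj] (S S' : Finset V) :
    MeasurableSet {u : ℝ | esStep G S u = S'} := by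
  rw [esStep_set_eq]
  refine MeasurableSet.iInter fun y => ?_
  split
  · exact measurableSet_Iic
  · exact measurableSet_Ioi

/-- kernel given by restricting the threshold to a set `J ⊆ [0,1]`. -/
def KJ (G : SimpleGraph V) [DecidableRel G.Adj] (J : Set ℝ) (S S' : Finset V) : ℝ :=
  (MeasureTheory.volume {u : ℝ | u ∈ J ∧ esStep G S u = S'}).toReal

lemma kk_eq_KJ (G : SimpleGraph V) [DecidableRel G.Adj] (S S' : Finset V) :
    Kk G S S' = KJ G (Set.Icc 0 1) S S' := rfl

lemma KJ_nonneg (G : SimpleGraph V) [DecidableRel G.Adj] (J : Set ℝ) (S S' : Finset V) :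
    0 ≤ KJ G J S S' := ENNReal.toReal_nonneg

lemma kk_nonneg (G : SimpleGraph V) [DecidableRel G.Adj] (S S' : Finset V) :
    0 ≤ Kk G S S' := ENNReal.toReal_nonneg

lemma sum_KJ (G : SimpleGraph V) [DecidableRel G.Adj] {J : Set ℝ} (hJ : MeasurableSet J)
    (hfin : MeasureTheory.volume J ≠ ⊤) (S : Finset V) (t : Finset (Finset V)) :
    ∑ S' ∈ t, KJ G J S S'
      = (MeasureTheory.volume {u : ℝ | u ∈ J ∧ esStep G S u ∈ t}).toReal := by
  have hset : {u : ℝ | u ∈ J ∧ esStep G S u ∈ t}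
      = ⋃ S' ∈ t, {u : ℝ | u ∈ J ∧ esStep G S u = S'} := by
    ext u
    simp only [Set.mem_setOf_eq, Set.mem_iUnion]
    constructor
    · rintro ⟨hu, ht⟩; exact ⟨_, ht, hu, rfl⟩
    · rintro ⟨S', hS', hu, he⟩; exact ⟨hu, he ▸ hS'⟩
  have hmeas : ∀ S' : Finset V, MeasurableSet {u : ℝ | u ∈ J ∧ esStep G S u = S'} := by
    intro S'
    exact hJ.inter (measurableSet_esStep_eq G S S')
  have hdisj : (↑t : Set (Finset V)).PairwiseDisjoint
      (fun S' => {u : ℝ | u ∈ J ∧ esStep G S u = S'}) := by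
    intro a _ b _ hab
    refine Set.disjoint_left.2 fun u hua hub => hab ?_
    exact hua.2.symm.trans hub.2
  rw [hset, MeasureTheory.measure_biUnion_finset hdisj (fun S' _ => hmeas S')]
  rw [ENNReal.toReal_sum (fun S' _ =>
    ne_top_of_le_ne_top hfin (measure_mono (fun u hu => hu.1)))]
  rfl

lemma sum_KJ_indicator (G : SimpleGraph V) [DecidableRel G.Adj] {J : Set ℝ}
    (hJ : MeasurableSet J) (hfin : MeasureTheory.volume J ≠ ⊤) (S : Finset V) (y : V) :
    ∑ S' : Finset V, KJ G J S S' * (if y ∈ S' then (1:ℝ) else 0)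
      = (MeasureTheory.volume {u : ℝ | u ∈ J ∧ u ≤ pset G y S}).toReal := by
  have h1 : ∑ S' : Finset V, KJ G J S S' * (if y ∈ S' then (1:ℝ) else 0)
      = ∑ S' ∈ Finset.univ.filter (fun S' : Finset V => y ∈ S'), KJ G J S S' := by
    rw [Finset.sum_filter]
    refine Finset.sum_congr rfl fun S' _ => ?_
    split <;> simp
  rw [h1, sum_KJ G hJ hfin S]
  congr 2
  ext u
  simp [mem_esStep_iff]

end Kernels


section KernelSums

open MeasureTheory

variable (G : SimpleGraph V) [DecidableRel G.Adj]

lemma sum_kk_one (S : Finset V) : ∑ S' : Finset V, Kk G S S' = 1 := by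
  have h := sum_KJ G (measurableSet_Icc : MeasurableSet (Set.Icc (0:ℝ) 1))
    (by rw [Real.volume_Icc]; exact ENNReal.ofReal_ne_top) S Finset.univ
  simp only [Finset.mem_univ, and_true] at h
  have h2 : ∀ S' : Finset V, Kk G S S' = KJ G (Set.Icc 0 1) S S' := kk_eq_KJ G S
  rw [Finset.sum_congr rfl (fun S' _ => h2 S'), h]
  have : {u : ℝ | u ∈ Set.Icc (0:ℝ) 1} = Set.Icc (0:ℝ) 1 := rfl
  rw [this, Real.volume_Icc]
  norm_num

lemma sum_kk_indicator (S : Finset V) (y : V) :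
    ∑ S' : Finset V, Kk G S S' * (if y ∈ S' then (1:ℝ) else 0) = pset G y S := by
  have h := sum_KJ_indicator G (measurableSet_Icc : MeasurableSet (Set.Icc (0:ℝ) 1))
    (by rw [Real.volume_Icc]; exact ENNReal.ofReal_ne_top) S y
  have h2 : ∀ S' : Finset V, Kk G S S' = KJ G (Set.Icc 0 1) S S' := kk_eq_KJ G S
  rw [Finset.sum_congr rfl (fun S' _ => by rw [h2 S']), h]
  have hset : {u : ℝ | u ∈ Set.Icc (0:ℝ) 1 ∧ u ≤ pset G y S} = Set.Icc 0 (pset G y S) := by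
    ext u
    simp only [Set.mem_setOf_eq, Set.mem_Icc]
    constructor
    · rintro ⟨⟨h0, _⟩, hp⟩; exact ⟨h0, hp⟩
    · rintro ⟨h0, hp⟩; exact ⟨⟨h0, hp.trans (pset_le_one G y S)⟩, hp⟩
  rw [hset, Real.volume_Icc]
  rw [ENNReal.toReal_ofReal (by simpa using pset_nonneg G y S)]
  simp

/-- down-kernel: thresholds in `(1/2, 1]`. -/
def Kdn (S S' : Finset V) : ℝ := KJ G (Set.Ioc 2⁻¹ 1) S S'

/-- up-kernel: thresholds in `[0, 1/2]`. -/
def Kup (S S' : Finset V) : ℝ := KJ G (Set.Icc 0 2⁻¹) S S'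

lemma kk_eq_kup_add_kdn (S S' : Finset V) : Kk G S S' = Kup G S S' + Kdn G S S' := by
  unfold Kup Kdn KJ
  rw [kk_eq_KJ]
  unfold KJ
  have hsplit : {u : ℝ | u ∈ Set.Icc (0:ℝ) 1 ∧ esStep G S u = S'}
      = {u : ℝ | u ∈ Set.Icc (0:ℝ) 2⁻¹ ∧ esStep G S u = S'}
        ∪ {u : ℝ | u ∈ Set.Ioc (2⁻¹:ℝ) 1 ∧ esStep G S u = S'} := by
    ext u
    simp only [Set.mem_setOf_eq, Set.mem_union, Set.mem_Icc, Set.mem_Ioc]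
    constructor
    · rintro ⟨⟨h0, h1⟩, he⟩
      rcases le_or_gt u 2⁻¹ with h | h
      · exact Or.inl ⟨⟨h0, h⟩, he⟩
      · exact Or.inr ⟨⟨h, h1⟩, he⟩
    · rintro (⟨⟨h0, h⟩, he⟩ | ⟨⟨h, h1⟩, he⟩)
      · exact ⟨⟨h0, h.trans (by norm_num)⟩, he⟩
      · exact ⟨⟨by linarith [h], h1⟩, he⟩
  rw [hsplit, measure_union ?hd ?hm, ENNReal.toReal_add ?h1 ?h2]
  case hd =>
    refine Set.disjoint_left.2 fun u hu1 hu2 => ?_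
    exact absurd hu2.1.1 (not_lt.2 hu1.1.2)
  case hm => exact (measurableSet_Ioc.inter (measurableSet_esStep_eq G S S'))
  case h1 =>
    refine ne_top_of_le_ne_top (by rw [Real.volume_Icc]; exact ENNReal.ofReal_ne_top)
      (measure_mono fun u hu => hu.1)
  case h2 =>
    refine ne_top_of_le_ne_top (by rw [Real.volume_Ioc]; exact ENNReal.ofReal_ne_top)
      (measure_mono fun u hu => hu.1)

lemma sum_kup_one (S : Finset V) : ∑ S' : Finset V, Kup G S S' = 2⁻¹ := by
  have h := sum_KJ G (measurableSet_Icc : MeasurableSet (Set.Icc (0:ℝ) 2⁻¹))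
    (by rw [Real.volume_Icc]; exact ENNReal.ofReal_ne_top) S Finset.univ
  simp only [Finset.mem_univ, and_true] at h
  rw [show (fun S' => Kup G S S') = fun S' => KJ G (Set.Icc 0 2⁻¹) S S' from rfl] at *
  rw [h]
  have : {u : ℝ | u ∈ Set.Icc (0:ℝ) 2⁻¹} = Set.Icc (0:ℝ) 2⁻¹ := rfl
  rw [this, Real.volume_Icc]
  norm_num

lemma sum_kdn_one (S : Finset V) : ∑ S' : Finset V, Kdn G S S' = 2⁻¹ := by
  have h := sum_KJ G (measurableSet_Ioc : MeasurableSet (Set.Ioc (2⁻¹:ℝ) 1))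
    (by rw [Real.volume_Ioc]; exact ENNReal.ofReal_ne_top) S Finset.univ
  simp only [Finset.mem_univ, and_true] at h
  rw [show (fun S' => Kdn G S S') = fun S' => KJ G (Set.Ioc 2⁻¹ 1) S S' from rfl] at *
  rw [h]
  have : {u : ℝ | u ∈ Set.Ioc (2⁻¹:ℝ) 1} = Set.Ioc (2⁻¹:ℝ) 1 := rfl
  rw [this, Real.volume_Ioc]
  norm_num

lemma sum_kup_indicator (S : Finset V) (y : V) :
    ∑ S' : Finset V, Kup G S S' * (if y ∈ S' then (1:ℝ) else 0)
      = min (pset G y S) 2⁻¹ := by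
  have h := sum_KJ_indicator G (measurableSet_Icc : MeasurableSet (Set.Icc (0:ℝ) 2⁻¹))
    (by rw [Real.volume_Icc]; exact ENNReal.ofReal_ne_top) S y
  unfold Kup
  rw [h]
  have hset : {u : ℝ | u ∈ Set.Icc (0:ℝ) 2⁻¹ ∧ u ≤ pset G y S}
      = Set.Icc 0 (min (pset G y S) 2⁻¹) := by
    ext u
    simp only [Set.mem_setOf_eq, Set.mem_Icc, le_min_iff]
    tauto
  rw [hset, Real.volume_Icc]
  rw [ENNReal.toReal_ofReal (by
    rw [sub_zero]
    exact le_min (pset_nonneg G y S) (by norm_num))]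
  simp

lemma sum_kdn_indicator (S : Finset V) (y : V) :
    ∑ S' : Finset V, Kdn G S S' * (if y ∈ S' then (1:ℝ) else 0)
      = if y ∈ S then pset G y S - 2⁻¹ else 0 := by
  have h := sum_KJ_indicator G (measurableSet_Ioc : MeasurableSet (Set.Ioc (2⁻¹:ℝ) 1))
    (by rw [Real.volume_Ioc]; exact ENNReal.ofReal_ne_top) S y
  unfold Kdn
  rw [h]
  by_cases hy : y ∈ S
  · have hset : {u : ℝ | u ∈ Set.Ioc (2⁻¹:ℝ) 1 ∧ u ≤ pset G y S}
        = Set.Ioc (2⁻¹:ℝ) (pset G y S) := by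
      ext u
      simp only [Set.mem_setOf_eq, Set.mem_Ioc]
      constructor
      · rintro ⟨⟨h1, _⟩, hp⟩; exact ⟨h1, hp⟩
      · rintro ⟨h1, hp⟩; exact ⟨⟨h1, hp.trans (pset_le_one G y S)⟩, hp⟩
    rw [hset, Real.volume_Ioc, if_pos hy]
    rw [ENNReal.toReal_ofReal (by linarith [half_le_pset_of_mem (G := G) hy])]
  · have hset : {u : ℝ | u ∈ Set.Ioc (2⁻¹:ℝ) 1 ∧ u ≤ pset G y S} = (∅ : Set ℝ) := by
      ext u
      simp only [Set.mem_setOf_eq, Set.mem_Ioc, Set.mem_empty_iff_false, iff_false, not_and]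
      rintro ⟨h1, _⟩ hp
      have := hp.trans (pset_le_half_of_not_mem (G := G) hy)
      norm_num at this h1
      linarith
    rw [hset, if_neg hy]
    simp

lemma sum_kernel_vol_inter (κ : Finset V → ℝ) (B : Finset V) :
    ∑ S' : Finset V, κ S' * vol G (S' ∩ B)
      = ∑ y ∈ B, (G.degree y : ℝ)
          * (∑ S' : Finset V, κ S' * (if y ∈ S' then (1:ℝ) else 0)) := by
  have h1 : ∀ S' : Finset V, vol G (S' ∩ B)
      = ∑ y ∈ B, (G.degree y : ℝ) * (if y ∈ S' then (1:ℝ) else 0) := by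
    intro S'
    unfold vol
    rw [Finset.inter_comm, ← Finset.filter_mem_eq_inter, Finset.sum_filter]
    refine Finset.sum_congr rfl fun y _ => by split <;> simp
  rw [Finset.sum_congr rfl (fun S' _ => by rw [h1 S', Finset.mul_sum])]
  rw [Finset.sum_comm]
  refine Finset.sum_congr rfl fun y _ => ?_
  rw [Finset.mul_sum]
  exact Finset.sum_congr rfl fun S' _ => by ring

end KernelSums


section Gauge

variable (G : SimpleGraph V) [DecidableRel G.Adj]

lemma sum_kk_vol (S : Finset V) :
    ∑ S' : Finset V, Kk G S S' * vol G S' = vol G S := by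
  have h : ∀ S' : Finset V, vol G S' = vol G (S' ∩ Finset.univ) := by
    intro S'; rw [Finset.inter_univ]
  rw [Finset.sum_congr rfl fun S' _ => by rw [h S']]
  rw [sum_kernel_vol_inter]
  rw [Finset.sum_congr rfl fun y _ => by rw [sum_kk_indicator]]
  rw [← Finset.sum_add_sum_compl S (fun y => (G.degree y : ℝ) * pset G y S)]
  rw [sum_deg_pset_self, sum_deg_pset_compl]
  ring

lemma sum_kup_vol (S : Finset V) :
    ∑ S' : Finset V, Kup G S S' * vol G S' = (vol G S + bdry G S) / 2 := by
  have h : ∀ S' : Finset V, vol G S' = vol G (S' ∩ Finset.univ) := by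
    intro S'; rw [Finset.inter_univ]
  rw [Finset.sum_congr rfl fun S' _ => by rw [h S']]
  rw [sum_kernel_vol_inter]
  rw [Finset.sum_congr rfl fun y _ => by rw [sum_kup_indicator]]
  rw [← Finset.sum_add_sum_compl S
    (fun y => (G.degree y : ℝ) * min (pset G y S) 2⁻¹)]
  have h1 : ∀ y ∈ S, (G.degree y : ℝ) * min (pset G y S) 2⁻¹ = (G.degree y : ℝ) * 2⁻¹ := by
    intro y hy
    rw [min_eq_right]
    have := half_le_pset_of_mem (G := G) hy
    linarith
  have h2 : ∀ y ∈ Sᶜ, (G.degree y : ℝ) * min (pset G y S) 2⁻¹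
      = (G.degree y : ℝ) * pset G y S := by
    intro y hy
    rw [min_eq_left]
    have := pset_le_half_of_not_mem (G := G) (Finset.mem_compl.1 hy)
    linarith
  rw [Finset.sum_congr rfl h1, Finset.sum_congr rfl h2, sum_deg_pset_compl]
  rw [← Finset.sum_mul]
  unfold vol
  ring

lemma sum_kdn_vol (S : Finset V) :
    ∑ S' : Finset V, Kdn G S S' * vol G S' = (vol G S - bdry G S) / 2 := by
  have h : ∀ S' : Finset V, vol G S' = vol G (S' ∩ Finset.univ) := by
    intro S'; rw [Finset.inter_univ]
  rw [Finset.sum_congr rfl fun S' _ => by rw [h S']]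
  rw [sum_kernel_vol_inter]
  rw [Finset.sum_congr rfl fun y _ => by rw [sum_kdn_indicator]]
  have h1 : ∀ y : V, (G.degree y : ℝ) * (if y ∈ S then pset G y S - 2⁻¹ else 0)
      = if y ∈ S then (G.degree y : ℝ) * pset G y S - (G.degree y : ℝ) * 2⁻¹ else 0 := by
    intro y; split <;> ring
  rw [Finset.sum_congr rfl fun y _ => h1 y]
  rw [Finset.sum_ite_mem]
  rw [Finset.univ_inter, Finset.sum_sub_distrib, sum_deg_pset_self, ← Finset.sum_mul]
  unfold vol
  ring

lemma sqrt_avg_ineq {x : ℝ} (h0 : 0 ≤ x) (h1 : x ≤ 1) :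
    Real.sqrt (1+x) + Real.sqrt (1-x) ≤ 2 - x^2/4 := by
  have hs1 : Real.sqrt (1 - x^2) ≤ 1 - x^2/2 := by
    have h2 : 1 - x^2 ≤ (1 - x^2/2)^2 := by nlinarith
    calc Real.sqrt (1-x^2) ≤ Real.sqrt ((1 - x^2/2)^2) := Real.sqrt_le_sqrt h2
      _ = 1 - x^2/2 := Real.sqrt_sq (by nlinarith)
  have hL : (Real.sqrt (1+x) + Real.sqrt (1-x))^2 = 2 + 2 * Real.sqrt ((1+x)*(1-x)) := by
    have e1 : Real.sqrt (1+x) ^ 2 = 1 + x := Real.sq_sqrt (by linarith)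
    have e2 : Real.sqrt (1-x) ^ 2 = 1 - x := Real.sq_sqrt (by linarith)
    have e3 : Real.sqrt (1+x) * Real.sqrt (1-x) = Real.sqrt ((1+x)*(1-x)) :=
      (Real.sqrt_mul (by linarith) _).symm
    nlinarith [e1, e2, e3]
  have hmm : (1+x)*(1-x) = 1 - x^2 := by ring
  have hLle : (Real.sqrt (1+x) + Real.sqrt (1-x))^2 ≤ (2 - x^2/4)^2 := by
    rw [hL, hmm]
    nlinarith [hs1]
  have hsum_nonneg : 0 ≤ Real.sqrt (1+x) + Real.sqrt (1-x) := by positivity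
  have hR : (0:ℝ) ≤ 2 - x^2/4 := by nlinarith
  nlinarith [hLle, hsum_nonneg, hR]

lemma sum_kk_sqrt_vol {S : Finset V} (h : 0 < vol G S) :
    ∑ S' : Finset V, Kk G S S' * Real.sqrt (vol G S')
      ≤ Real.sqrt (vol G S) * (1 - (phiCond G S)^2/8) := by
  set m := vol G S with hm
  set b := bdry G S with hb
  have hb0 : 0 ≤ b := bdry_nonneg G S
  have hbm : b ≤ m := bdry_le_vol G S
  -- Cauchy-Schwarz bounds for each half-kernel
  have cs : ∀ (κ : Finset V → Finset V → ℝ), (∀ S', 0 ≤ κ S S') →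
      (∑ S' : Finset V, κ S S' * Real.sqrt (vol G S'))^2
        ≤ (∑ S' : Finset V, κ S S') * (∑ S' : Finset V, κ S S' * vol G S') := by
    intro κ hκ
    have := Finset.sum_mul_sq_le_sq_mul_sq Finset.univ
      (fun S' => Real.sqrt (κ S S')) (fun S' => Real.sqrt (κ S S') * Real.sqrt (vol G S'))
    have e1 : ∀ S' : Finset V, Real.sqrt (κ S S') * (Real.sqrt (κ S S') * Real.sqrt (vol G S'))
        = κ S S' * Real.sqrt (vol G S') := by
      intro S'
      rw [← mul_assoc, Real.mul_self_sqrt (hκ S')]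
    have e2 : ∀ S' : Finset V, Real.sqrt (κ S S') ^ 2 = κ S S' := fun S' => Real.sq_sqrt (hκ S')
    have e3 : ∀ S' : Finset V, (Real.sqrt (κ S S') * Real.sqrt (vol G S'))^2
        = κ S S' * vol G S' := by
      intro S'
      rw [mul_pow, Real.sq_sqrt (hκ S'), Real.sq_sqrt (vol_nonneg G S')]
    calc (∑ S' : Finset V, κ S S' * Real.sqrt (vol G S'))^2
        = (∑ S' : Finset V, Real.sqrt (κ S S') * (Real.sqrt (κ S S') * Real.sqrt (vol G S')))^2 := by
          rw [Finset.sum_congr rfl fun S' _ => (e1 S')]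
      _ ≤ (∑ S' : Finset V, Real.sqrt (κ S S') ^ 2)
            * (∑ S' : Finset V, (Real.sqrt (κ S S') * Real.sqrt (vol G S'))^2) := this
      _ = (∑ S' : Finset V, κ S S') * (∑ S' : Finset V, κ S S' * vol G S') := by
          rw [Finset.sum_congr rfl fun S' _ => (e2 S'), Finset.sum_congr rfl fun S' _ => (e3 S')]
  have hup : ∑ S' : Finset V, Kup G S S' * Real.sqrt (vol G S') ≤ Real.sqrt (m + b) / 2 := by
    have h1 := cs (Kup G) (fun S' => KJ_nonneg G _ S S')
    rw [sum_kup_one, sum_kup_vol] at h1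
    have h2 : 0 ≤ ∑ S' : Finset V, Kup G S S' * Real.sqrt (vol G S') :=
      Finset.sum_nonneg fun S' _ => mul_nonneg (KJ_nonneg G _ S S') (Real.sqrt_nonneg _)
    have h3 : (Real.sqrt (m+b)/2)^2 = (m+b)/4 := by
      rw [div_pow, Real.sq_sqrt (by linarith)]
      norm_num
    nlinarith [h1, h2, h3, Real.sqrt_nonneg (m+b)]
  have hdn : ∑ S' : Finset V, Kdn G S S' * Real.sqrt (vol G S') ≤ Real.sqrt (m - b) / 2 := by
    have h1 := cs (Kdn G) (fun S' => KJ_nonneg G _ S S')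
    rw [sum_kdn_one, sum_kdn_vol] at h1
    have h2 : 0 ≤ ∑ S' : Finset V, Kdn G S S' * Real.sqrt (vol G S') :=
      Finset.sum_nonneg fun S' _ => mul_nonneg (KJ_nonneg G _ S S') (Real.sqrt_nonneg _)
    have h3 : (Real.sqrt (m-b)/2)^2 = (m-b)/4 := by
      rw [div_pow, Real.sq_sqrt (by linarith)]
      norm_num
    nlinarith [h1, h2, h3, Real.sqrt_nonneg (m-b)]
  have hsplit : ∑ S' : Finset V, Kk G S S' * Real.sqrt (vol G S')
      = (∑ S' : Finset V, Kup G S S' * Real.sqrt (vol G S'))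
        + ∑ S' : Finset V, Kdn G S S' * Real.sqrt (vol G S') := by
    rw [← Finset.sum_add_distrib]
    refine Finset.sum_congr rfl fun S' _ => ?_
    rw [kk_eq_kup_add_kdn]
    ring
  -- substitution x = b/m
  set x := b / m with hx
  have hx0 : 0 ≤ x := div_nonneg hb0 (le_of_lt h)
  have hx1 : x ≤ 1 := (div_le_one h).2 hbm
  have hxb : b = m * x := by
    rw [hx]; field_simp
  have hsub : Real.sqrt (m+b) + Real.sqrt (m-b)
      ≤ Real.sqrt m * (2 - x^2/4) := by
    have e1 : Real.sqrt (m+b) = Real.sqrt m * Real.sqrt (1+x) := by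
      rw [← Real.sqrt_mul (le_of_lt h)]
      congr 1
      rw [hxb]; ring
    have e2 : Real.sqrt (m-b) = Real.sqrt m * Real.sqrt (1-x) := by
      rw [← Real.sqrt_mul (le_of_lt h)]
      congr 1
      rw [hxb]; ring
    rw [e1, e2, ← mul_add]
    exact mul_le_mul_of_nonneg_left (sqrt_avg_ineq hx0 hx1) (Real.sqrt_nonneg m)
  have hphi : phiCond G S = x := rfl
  rw [hsplit, hphi]
  calc (∑ S' : Finset V, Kup G S S' * Real.sqrt (vol G S'))
        + ∑ S' : Finset V, Kdn G S S' * Real.sqrt (vol G S')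
      ≤ Real.sqrt (m+b)/2 + Real.sqrt (m-b)/2 := add_le_add hup hdn
    _ = (Real.sqrt (m+b) + Real.sqrt (m-b))/2 := by ring
    _ ≤ Real.sqrt m * (2 - x^2/4) / 2 := by linarith [hsub]
    _ = Real.sqrt m * (1 - x^2/8) := by ring

lemma khat_nonneg (S S' : Finset V) : 0 ≤ Khat G S S' :=
  mul_nonneg (div_nonneg (vol_nonneg G S') (vol_nonneg G S)) (kk_nonneg G S S')

lemma khat_zero_of_vol_zero {S S' : Finset V} (h : vol G S' = 0) : Khat G S S' = 0 := by
  unfold Khat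
  rw [h, zero_div, zero_mul]

lemma sum_khat_one {S : Finset V} (h : 0 < vol G S) : ∑ S' : Finset V, Khat G S S' = 1 := by
  unfold Khat
  have : ∀ S' : Finset V, vol G S' / vol G S * Kk G S S'
      = (vol G S)⁻¹ * (Kk G S S' * vol G S') := by
    intro S'; field_simp
  rw [Finset.sum_congr rfl fun S' _ => this S', ← Finset.mul_sum, sum_kk_vol]
  field_simp

lemma sum_khat_invsqrt {S : Finset V} (h : 0 < vol G S) :
    ∑ S' : Finset V, Khat G S S' * (Real.sqrt (vol G S'))⁻¹
      ≤ (1 - (phiCond G S)^2/8) * (Real.sqrt (vol G S))⁻¹ := by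
  have key : ∀ S' : Finset V, Khat G S S' * (Real.sqrt (vol G S'))⁻¹
      = (vol G S)⁻¹ * (Kk G S S' * Real.sqrt (vol G S')) := by
    intro S'
    unfold Khat
    by_cases h0 : vol G S' = 0
    · rw [h0, Real.sqrt_zero, zero_div]
      simp
    · have hpos : 0 < vol G S' := lt_of_le_of_ne (vol_nonneg G S') (Ne.symm h0)
      have hs : Real.sqrt (vol G S') ≠ 0 := by positivity
      have e : vol G S' * (Real.sqrt (vol G S'))⁻¹ = Real.sqrt (vol G S') := by
        field_simp
        rw [Real.sq_sqrt hpos.le]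
      calc vol G S' / vol G S * Kk G S S' * (Real.sqrt (vol G S'))⁻¹
          = (vol G S)⁻¹ * (Kk G S S' * (vol G S' * (Real.sqrt (vol G S'))⁻¹)) := by
            rw [div_eq_mul_inv]; ring
        _ = (vol G S)⁻¹ * (Kk G S S' * Real.sqrt (vol G S')) := by rw [e]
  rw [Finset.sum_congr rfl fun S' _ => key S', ← Finset.mul_sum]
  have h1 := sum_kk_sqrt_vol G h
  have h2 : Real.sqrt (vol G S) = vol G S * (Real.sqrt (vol G S))⁻¹ := by
    have hs : Real.sqrt (vol G S) ≠ 0 := by positivity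
    rw [← Real.sqrt_mul_self (le_of_lt h)]
    field_simp
    rw [Real.sq_sqrt (Real.sqrt_nonneg _)]
  calc (vol G S)⁻¹ * ∑ S' : Finset V, Kk G S S' * Real.sqrt (vol G S')
      ≤ (vol G S)⁻¹ * (Real.sqrt (vol G S) * (1 - (phiCond G S)^2/8)) := by
        apply mul_le_mul_of_nonneg_left h1
        positivity
    _ = (1 - (phiCond G S)^2/8) * (Real.sqrt (vol G S))⁻¹ := by
        have hv : vol G S ≠ 0 := ne_of_gt h
        have hs : Real.sqrt (vol G S) ≠ 0 := by positivity
        have e2 : (vol G S)⁻¹ * Real.sqrt (vol G S) = (Real.sqrt (vol G S))⁻¹ := by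
          field_simp
          exact Real.sq_sqrt h.le
        calc (vol G S)⁻¹ * (Real.sqrt (vol G S) * (1 - (phiCond G S)^2/8))
            = ((vol G S)⁻¹ * Real.sqrt (vol G S)) * (1 - (phiCond G S)^2/8) := by ring
          _ = (1 - (phiCond G S)^2/8) * (Real.sqrt (vol G S))⁻¹ := by rw [e2]; ring

end Gauge


section Paths

variable (G : SimpleGraph V) [DecidableRel G.Adj]

lemma Epath_zero (κ : Finset V → Finset V → ℝ) (S₀ : Finset V)
    (f : (Fin 1 → Finset V) → ℝ) :
    Epath κ S₀ 0 f = f (fun _ => S₀) := by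
  unfold Epath
  rw [Finset.sum_eq_single (fun _ : Fin 1 => S₀)]
  · simp
  · intro w _ hw
    rw [if_neg]
    intro h
    apply hw
    funext i
    have hi : i = 0 := Subsingleton.elim _ _
    rw [hi, h]
  · intro h
    exact absurd (Finset.mem_univ _) h

lemma Epath_cons (κ : Finset V → Finset V → ℝ) (S₀ : Finset V) (t : ℕ)
    (f : (Fin (t+2) → Finset V) → ℝ) :
    Epath κ S₀ (t+1) f
      = ∑ S' : Finset V, κ S₀ S' * Epath κ S' t (fun v => f (Fin.cons S₀ v)) := by
  have hcons : ∀ (p : Finset V × (Fin (t+1) → Finset V)),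
      (Fin.consEquiv (fun _ : Fin (t+2) => Finset V)) p = Fin.cons p.1 p.2 := by
    intro p; ext i; simp [Fin.consEquiv]
  have hprod : ∀ (a : Finset V) (v : Fin (t+1) → Finset V),
      (∏ j : Fin (t+1), κ ((Fin.cons a v : Fin (t+2) → Finset V) j.castSucc)
          ((Fin.cons a v : Fin (t+2) → Finset V) j.succ))
        = κ a (v 0) * ∏ j : Fin t, κ (v j.castSucc) (v j.succ) := by
    intro a v
    rw [Fin.prod_univ_succ]
    refine congrArg₂ (· * ·) (by simp) (Finset.prod_congr rfl fun j _ => ?_)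
    rw [← Fin.succ_castSucc]
    simp [Fin.cons_succ]
  unfold Epath
  rw [← Fintype.sum_equiv (Fin.consEquiv (fun _ : Fin (t+2) => Finset V))
      (fun p => if (Fin.cons p.1 p.2 : Fin (t+2) → Finset V) 0 = S₀ then
        (∏ j : Fin (t+1), κ ((Fin.cons p.1 p.2 : Fin (t+2) → Finset V) j.castSucc)
          ((Fin.cons p.1 p.2 : Fin (t+2) → Finset V) j.succ))
          * f (Fin.cons p.1 p.2) else 0)
      (fun w => if w 0 = S₀ then (∏ j : Fin (t+1), κ (w j.castSucc) (w j.succ)) * f w else 0)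
      (fun p => by rw [hcons p])]
  rw [Fintype.sum_prod_type]
  have h1 : ∀ (a : Finset V) (v : Fin (t+1) → Finset V),
      (if (Fin.cons a v : Fin (t+2) → Finset V) 0 = S₀ then
        (∏ j : Fin (t+1), κ ((Fin.cons a v : Fin (t+2) → Finset V) j.castSucc)
          ((Fin.cons a v : Fin (t+2) → Finset V) j.succ))
          * f (Fin.cons a v) else 0)
      = if a = S₀ then (κ a (v 0) * ∏ j : Fin t, κ (v j.castSucc) (v j.succ))
          * f (Fin.cons a v) else 0 := by
    intro a v
    rw [Fin.cons_zero, hprod a v]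
  rw [Finset.sum_congr rfl fun a _ => Finset.sum_congr rfl fun v _ => h1 a v]
  rw [Finset.sum_comm]
  have h2 : ∀ v : Fin (t+1) → Finset V,
      (∑ a : Finset V, if a = S₀ then
          (κ a (v 0) * ∏ j : Fin t, κ (v j.castSucc) (v j.succ)) * f (Fin.cons a v) else 0)
      = (κ S₀ (v 0) * ∏ j : Fin t, κ (v j.castSucc) (v j.succ)) * f (Fin.cons S₀ v) := by
    intro v
    rw [Finset.sum_ite_eq' Finset.univ S₀
      (fun a => (κ a (v 0) * ∏ j : Fin t, κ (v j.castSucc) (v j.succ)) * f (Fin.cons a v))]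
    simp
  rw [Finset.sum_congr rfl fun v _ => h2 v]
  have h3 : ∀ S' : Finset V, κ S₀ S' * (∑ v : Fin (t+1) → Finset V, if v 0 = S' then
        (∏ j : Fin t, κ (v j.castSucc) (v j.succ)) * f (Fin.cons S₀ v) else 0)
      = ∑ v : Fin (t+1) → Finset V, (if v 0 = S' then
          κ S₀ S' * ((∏ j : Fin t, κ (v j.castSucc) (v j.succ)) * f (Fin.cons S₀ v)) else 0) := by
    intro S'
    rw [Finset.mul_sum]
    refine Finset.sum_congr rfl fun v _ => ?_
    split <;> simp
  rw [Finset.sum_congr rfl fun S' (_ : S' ∈ Finset.univ) => h3 S']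
  rw [Finset.sum_comm]
  refine Finset.sum_congr rfl fun v _ => ?_
  rw [Finset.sum_ite_eq Finset.univ (v 0)
    (fun S' => κ S₀ S' * ((∏ j : Fin t, κ (v j.castSucc) (v j.succ)) * f (Fin.cons S₀ v)))]
  simp only [Finset.mem_univ, if_true]
  ring

end Paths


section PathLemmas

variable (G : SimpleGraph V) [DecidableRel G.Adj]

lemma Epath_nonneg (κ : Finset V → Finset V → ℝ) (hκ : ∀ a b, 0 ≤ κ a b)
    (S₀ : Finset V) (t : ℕ) (f : (Fin (t+1) → Finset V) → ℝ)
    (hf : ∀ w, 0 ≤ f w) : 0 ≤ Epath κ S₀ t f := by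
  refine Finset.sum_nonneg fun w _ => ?_
  split
  · exact mul_nonneg (Finset.prod_nonneg fun j _ => hκ _ _) (hf w)
  · exact le_refl 0

lemma Epath_mono (κ : Finset V → Finset V → ℝ) (hκ : ∀ a b, 0 ≤ κ a b)
    (S₀ : Finset V) (t : ℕ) (f g : (Fin (t+1) → Finset V) → ℝ)
    (hfg : ∀ w, f w ≤ g w) : Epath κ S₀ t f ≤ Epath κ S₀ t g := by
  refine Finset.sum_le_sum fun w _ => ?_
  split
  · exact mul_le_mul_of_nonneg_left (hfg w) (Finset.prod_nonneg fun j _ => hκ _ _)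
  · exact le_refl 0

lemma Epath_const_mul (κ : Finset V → Finset V → ℝ) (S₀ : Finset V) (t : ℕ)
    (c : ℝ) (f : (Fin (t+1) → Finset V) → ℝ) :
    Epath κ S₀ t (fun w => c * f w) = c * Epath κ S₀ t f := by
  unfold Epath
  rw [Finset.mul_sum]
  refine Finset.sum_congr rfl fun w _ => ?_
  split <;> ring

lemma Epath_sub (κ : Finset V → Finset V → ℝ) (S₀ : Finset V) (t : ℕ)
    (f g : (Fin (t+1) → Finset V) → ℝ) :
    Epath κ S₀ t (fun w => f w - g w) = Epath κ S₀ t f - Epath κ S₀ t g := by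
  unfold Epath
  rw [← Finset.sum_sub_distrib]
  refine Finset.sum_congr rfl fun w _ => ?_
  split <;> ring

lemma Epath_finsum {ι : Type*} (κ : Finset V → Finset V → ℝ) (S₀ : Finset V) (t : ℕ)
    (B : Finset ι) (g : ι → (Fin (t+1) → Finset V) → ℝ) :
    Epath κ S₀ t (fun w => ∑ z ∈ B, g z w) = ∑ z ∈ B, Epath κ S₀ t (g z) := by
  unfold Epath
  rw [Finset.sum_comm]
  refine Finset.sum_congr rfl fun w _ => ?_
  split
  · rw [Finset.mul_sum]
  · rw [Finset.sum_const_zero]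

lemma prod_khat_eq_zero {t : ℕ} {w : Fin (t+1) → Finset V} {j : Fin (t+1)}
    (hj : j ≠ 0) (h : vol G (w j) = 0) :
    (∏ i : Fin t, Khat G (w i.castSucc) (w i.succ)) = 0 := by
  obtain ⟨i, rfl⟩ := Fin.exists_succ_eq.2 hj
  refine Finset.prod_eq_zero (Finset.mem_univ i) ?_
  exact khat_zero_of_vol_zero G h

lemma Epath_khat_support {S₀ : Finset V} (h : 0 < vol G S₀) (t : ℕ)
    (f : (Fin (t+1) → Finset V) → ℝ) :
    Epath (Khat G) S₀ t f
      = Epath (Khat G) S₀ t (fun w => if ∀ j, 0 < vol G (w j) then f w else 0) := by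
  unfold Epath
  refine Finset.sum_congr rfl fun w _ => ?_
  by_cases hw : w 0 = S₀
  · rw [if_pos hw, if_pos hw]
    beta_reduce
    by_cases hpos : ∀ j, 0 < vol G (w j)
    · rw [if_pos hpos]
    · rw [if_neg hpos, mul_zero]
      push_neg at hpos
      obtain ⟨j, hj⟩ := hpos
      have hz : vol G (w j) = 0 := le_antisymm hj (vol_nonneg G (w j))
      have hj0 : j ≠ 0 := by
        intro hje
        rw [hje, hw] at hz
        exact absurd hz (ne_of_gt h)
      rw [prod_khat_eq_zero G hj0 hz, zero_mul]
  · rw [if_neg hw, if_neg hw]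

lemma Epath_khat_one {S₀ : Finset V} (h : 0 < vol G S₀) (t : ℕ) :
    Epath (Khat G) S₀ t (fun _ => 1) = 1 := by
  induction t generalizing S₀ with
  | zero => rw [Epath_zero]
  | succ t ih =>
    rw [Epath_cons]
    have hterm : ∀ S' : Finset V, Khat G S₀ S' * Epath (Khat G) S' t (fun _ => 1)
        = Khat G S₀ S' := by
      intro S'
      by_cases h0 : vol G S' = 0
      · rw [khat_zero_of_vol_zero G h0, zero_mul]
      · rw [ih (lt_of_le_of_ne (vol_nonneg G S') (Ne.symm h0)), mul_one]
    rw [Finset.sum_congr rfl fun S' _ => hterm S']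
    exact sum_khat_one G h

lemma Epath_khat_le_one {S₀ : Finset V} (h : 0 < vol G S₀) (t : ℕ)
    (f : (Fin (t+1) → Finset V) → ℝ) (hf : ∀ w, f w ≤ 1) :
    Epath (Khat G) S₀ t f ≤ 1 := by
  calc Epath (Khat G) S₀ t f ≤ Epath (Khat G) S₀ t (fun _ => 1) :=
        Epath_mono (Khat G) (khat_nonneg G) S₀ t _ _ hf
    _ = 1 := Epath_khat_one G h t

end PathLemmas


section Escape

variable (G : SimpleGraph V) [DecidableRel G.Adj]

/-- bad set: more than a tenth of its volume lies outside `A`. -/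
def badP (A S : Finset V) : Prop := vol G S < 10 * vol G (S \ A)

/-- leakage of a set: the boundary mass from `S ∩ A` to `Aᶜ`. -/
def leakF (A S : Finset V) : ℝ := ∑ z ∈ S ∩ A, (G.degree z : ℝ) * pset G z Aᶜ

lemma leakF_nonneg (A S : Finset V) : 0 ≤ leakF G A S :=
  Finset.sum_nonneg fun z _ => mul_nonneg (by positivity) (pset_nonneg G z Aᶜ)

lemma step_escape (A S : Finset V) :
    ∑ S' : Finset V, Kk G S S' * vol G (S' \ A) ≤ vol G (S \ A) + leakF G A S := by
  have hsd : ∀ S' : Finset V, S' \ A = S' ∩ Aᶜ := by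
    intro S'
    ext x; simp
  rw [Finset.sum_congr rfl fun S' _ => by rw [hsd S']]
  rw [sum_kernel_vol_inter]
  rw [Finset.sum_congr rfl fun y _ => by rw [sum_kk_indicator]]
  rw [sum_deg_pset_symm]
  rw [← Finset.sum_inter_add_sum_sdiff S Aᶜ (fun z => (G.degree z : ℝ) * pset G z Aᶜ)]
  have e1 : S ∩ Aᶜ = S \ A := (hsd S).symm
  have e2 : S \ Aᶜ = S ∩ A := by
    ext x; simp
  rw [e1, e2]
  have h1 : ∑ z ∈ S \ A, (G.degree z : ℝ) * pset G z Aᶜ ≤ vol G (S \ A) := by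
    refine Finset.sum_le_sum fun z _ => ?_
    calc (G.degree z : ℝ) * pset G z Aᶜ ≤ (G.degree z : ℝ) * 1 :=
          mul_le_mul_of_nonneg_left (pset_le_one G z Aᶜ) (by positivity)
      _ = (G.degree z : ℝ) := mul_one _
  have h2 : ∑ z ∈ S ∩ A, (G.degree z : ℝ) * pset G z Aᶜ = leakF G A S := rfl
  rw [h2]
  unfold vol at h1 ⊢
  linarith

/-- the stopped expected escaped volume `E[μ(S_{τ∧t} \ A)]` for the `K`-chain. -/
def Mst (A : Finset V) : ℕ → Finset V → ℝ
  | 0, S => vol G (S \ A)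
  | (t+1), S => if badP G A S then vol G (S \ A)
      else ∑ S' : Finset V, Kk G S S' * Mst A t S'

lemma Mst_nonneg (A : Finset V) : ∀ (t : ℕ) (S : Finset V), 0 ≤ Mst G A t S := by
  intro t
  induction t with
  | zero => intro S; exact vol_nonneg G _
  | succ t ih =>
    intro S
    unfold Mst
    split
    · exact vol_nonneg G _
    · exact Finset.sum_nonneg fun S' _ => mul_nonneg (kk_nonneg G S S') (ih S')

/-- expected leakage after `t` steps of the `K`-chain. -/
def Dlk (A : Finset V) (t : ℕ) (S : Finset V) : ℝ :=
  Epath (Kk G) S t (fun w => leakF G A (w (Fin.last t)))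

lemma Dlk_nonneg (A : Finset V) (t : ℕ) (S : Finset V) : 0 ≤ Dlk G A t S :=
  Epath_nonneg _ (kk_nonneg G) S t _ (fun w => leakF_nonneg G A _)

lemma Dlk_zero (A S : Finset V) : Dlk G A 0 S = leakF G A S := by
  unfold Dlk
  rw [Epath_zero]

lemma Dlk_succ (A : Finset V) (t : ℕ) (S : Finset V) :
    Dlk G A (t+1) S = ∑ S' : Finset V, Kk G S S' * Dlk G A t S' := by
  unfold Dlk
  rw [Epath_cons]
  refine Finset.sum_congr rfl fun S' _ => ?_
  refine congrArg _ (congrArg _ (funext fun v => ?_))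
  rw [← Fin.succ_last, Fin.cons_succ]

lemma Mst_succ_le (A : Finset V) : ∀ (t : ℕ) (S : Finset V),
    Mst G A (t+1) S ≤ Mst G A t S + Dlk G A t S := by
  intro t
  induction t with
  | zero =>
    intro S
    rw [Dlk_zero]
    show (if badP G A S then vol G (S \ A)
        else ∑ S' : Finset V, Kk G S S' * Mst G A 0 S') ≤ vol G (S \ A) + leakF G A S
    split
    · linarith [leakF_nonneg G A S]
    · exact step_escape G A S
  | succ t ih =>
    intro S
    show (if badP G A S then vol G (S \ A)
        else ∑ S' : Finset V, Kk G S S' * Mst G A (t+1) S')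
      ≤ Mst G A (t+1) S + Dlk G A (t+1) S
    by_cases hb : badP G A S
    · rw [if_pos hb]
      have : Mst G A (t+1) S = vol G (S \ A) := by
        show (if badP G A S then _ else _) = _
        rw [if_pos hb]
      rw [this]
      linarith [Dlk_nonneg G A (t+1) S]
    · rw [if_neg hb]
      have h1 : ∑ S' : Finset V, Kk G S S' * Mst G A (t+1) S'
          ≤ ∑ S' : Finset V, Kk G S S' * (Mst G A t S' + Dlk G A t S') := by
        refine Finset.sum_le_sum fun S' _ => ?_
        exact mul_le_mul_of_nonneg_left (ih S') (kk_nonneg G S S')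
      have h2 : ∑ S' : Finset V, Kk G S S' * (Mst G A t S' + Dlk G A t S')
          = (∑ S' : Finset V, Kk G S S' * Mst G A t S')
            + ∑ S' : Finset V, Kk G S S' * Dlk G A t S' := by
        rw [← Finset.sum_add_distrib]
        exact Finset.sum_congr rfl fun S' _ => by ring
      have h3 : Mst G A (t+1) S = ∑ S' : Finset V, Kk G S S' * Mst G A t S' := by
        show (if badP G A S then _ else _) = _
        rw [if_neg hb]
      rw [Dlk_succ, h3]
      linarith [h1, h2]

lemma Mst_le_sum_Dlk (A : Finset V) : ∀ (T : ℕ) (S : Finset V),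
    Mst G A T S ≤ Mst G A 0 S + ∑ t ∈ Finset.range T, Dlk G A t S := by
  intro T
  induction T with
  | zero => intro S; simp [le_refl]
  | succ T ih =>
    intro S
    calc Mst G A (T+1) S ≤ Mst G A T S + Dlk G A T S := Mst_succ_le G A T S
      _ ≤ Mst G A 0 S + (∑ t ∈ Finset.range T, Dlk G A t S) + Dlk G A T S := by
          linarith [ih S]
      _ = Mst G A 0 S + ∑ t ∈ Finset.range (T+1), Dlk G A t S := by
          rw [Finset.sum_range_succ]
          ring

/-- `t`-step lazy walk kernel (reversed composition). -/
def ptkF : ℕ → V → V → ℝ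
  | 0, z, y => if z = y then 1 else 0
  | (t+1), z, y => ∑ x : V, ptkF t z x * walkP G x y

lemma ptkF_nonneg : ∀ (t : ℕ) (z y : V), 0 ≤ ptkF G t z y := by
  intro t
  induction t with
  | zero => intro z y; unfold ptkF; split <;> norm_num
  | succ t ih =>
    intro z y
    exact Finset.sum_nonneg fun x _ => mul_nonneg (ih z x) (walkP_nonneg G x y)

lemma sum_ptkF_le_one : ∀ (t : ℕ) (z : V), ∑ y : V, ptkF G t z y ≤ 1 := by
  intro t
  induction t with
  | zero =>
    intro z
    unfold ptkF
    rw [Finset.sum_ite_eq Finset.univ z (fun _ => (1:ℝ))]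
    simp
  | succ t ih =>
    intro z
    show ∑ y : V, ∑ x : V, ptkF G t z x * walkP G x y ≤ 1
    rw [Finset.sum_comm]
    calc ∑ x : V, ∑ y : V, ptkF G t z x * walkP G x y
        = ∑ x : V, ptkF G t z x * pset G x Finset.univ := by
          refine Finset.sum_congr rfl fun x _ => ?_
          rw [← Finset.mul_sum]
          rfl
      _ ≤ ∑ x : V, ptkF G t z x * 1 := by
          refine Finset.sum_le_sum fun x _ => ?_
          exact mul_le_mul_of_nonneg_left (pset_univ_le_one G x) (ptkF_nonneg G t z x)
      _ = ∑ x : V, ptkF G t z x := by simp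
      _ ≤ 1 := ih z

/-- probability that `z` belongs to the `t`-th set of the `K`-chain. -/
def Ihit (z : V) (t : ℕ) (S : Finset V) : ℝ :=
  Epath (Kk G) S t (fun w => if z ∈ w (Fin.last t) then (1:ℝ) else 0)

lemma Ihit_eq_ptkF (z : V) : ∀ (t : ℕ) (S : Finset V),
    Ihit G z t S = ∑ y ∈ S, ptkF G t z y := by
  intro t
  induction t with
  | zero =>
    intro S
    unfold Ihit
    rw [Epath_zero]
    show (if z ∈ S then (1:ℝ) else 0) = ∑ y ∈ S, ptkF G 0 z y
    unfold ptkF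
    rw [Finset.sum_ite_eq S z (fun _ => (1:ℝ))]
  | succ t ih =>
    intro S
    unfold Ihit
    rw [Epath_cons]
    have h1 : ∀ S' : Finset V,
        Epath (Kk G) S' t (fun v => if z ∈ (Fin.cons S v : Fin (t+2) → Finset V) (Fin.last (t+1)) then (1:ℝ) else 0)
          = Ihit G z t S' := by
      intro S'
      unfold Ihit
      refine congrArg _ (funext fun v => ?_)
      rw [← Fin.succ_last, Fin.cons_succ]
    rw [Finset.sum_congr rfl fun S' _ => by rw [h1 S']]
    rw [Finset.sum_congr rfl fun S' _ => by rw [ih S']]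
    have h2 : ∀ S' : Finset V, (∑ y ∈ S', ptkF G t z y)
        = ∑ y : V, ptkF G t z y * (if y ∈ S' then (1:ℝ) else 0) := by
      intro S'
      rw [show (∑ y : V, ptkF G t z y * if y ∈ S' then (1:ℝ) else 0)
          = ∑ y : V, if y ∈ S' then ptkF G t z y else 0 from
        Finset.sum_congr rfl fun y _ => by split <;> simp]
      rw [Finset.sum_ite_mem, Finset.univ_inter]
    rw [Finset.sum_congr rfl fun S' _ => by rw [h2 S']]
    calc ∑ S' : Finset V, Kk G S S' * ∑ y : V, ptkF G t z y * (if y ∈ S' then (1:ℝ) else 0)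
        = ∑ S' : Finset V, ∑ y : V, Kk G S S' * (ptkF G t z y * (if y ∈ S' then (1:ℝ) else 0)) := by
          exact Finset.sum_congr rfl fun S' _ => Finset.mul_sum _ _ _
      _ = ∑ y : V, ∑ S' : Finset V, Kk G S S' * (ptkF G t z y * (if y ∈ S' then (1:ℝ) else 0)) :=
          Finset.sum_comm
      _ = ∑ y : V, ptkF G t z y * ∑ S' : Finset V, Kk G S S' * (if y ∈ S' then (1:ℝ) else 0) := by
          refine Finset.sum_congr rfl fun y _ => ?_
          rw [Finset.mul_sum]
          exact Finset.sum_congr rfl fun S' _ => by ring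
      _ = ∑ y : V, ptkF G t z y * pset G y S := by
          exact Finset.sum_congr rfl fun y _ => by rw [sum_kk_indicator]
      _ = ∑ y : V, ∑ x ∈ S, ptkF G t z y * walkP G y x := by
          exact Finset.sum_congr rfl fun y _ => Finset.mul_sum _ _ _
      _ = ∑ x ∈ S, ∑ y : V, ptkF G t z y * walkP G y x := Finset.sum_comm
      _ = ∑ x ∈ S, ptkF G (t+1) z x := rfl

lemma sum_Ihit_le_one (z : V) (A : Finset V) (t : ℕ) :
    ∑ x ∈ A, Ihit G z t {x} ≤ 1 := by
  have h1 : ∀ x : V, Ihit G z t {x} = ptkF G t z x := by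
    intro x
    rw [Ihit_eq_ptkF, Finset.sum_singleton]
  rw [Finset.sum_congr rfl fun x _ => h1 x]
  calc ∑ x ∈ A, ptkF G t z x ≤ ∑ x : V, ptkF G t z x :=
        Finset.sum_le_sum_of_subset_of_nonneg (Finset.subset_univ A)
          (fun x _ _ => ptkF_nonneg G t z x)
    _ ≤ 1 := sum_ptkF_le_one G t z

lemma Ihit_nonneg (z : V) (t : ℕ) (S : Finset V) : 0 ≤ Ihit G z t S :=
  Epath_nonneg _ (kk_nonneg G) S t _ (fun w => by split <;> norm_num)

lemma Dlk_rep (A : Finset V) (t : ℕ) (S : Finset V) :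
    Dlk G A t S = ∑ z ∈ A, ((G.degree z : ℝ) * pset G z Aᶜ) * Ihit G z t S := by
  unfold Dlk
  have hleak : ∀ U : Finset V, leakF G A U
      = ∑ z ∈ A, ((G.degree z : ℝ) * pset G z Aᶜ) * (if z ∈ U then (1:ℝ) else 0) := by
    intro U
    unfold leakF
    rw [show (∑ z ∈ A, ((G.degree z : ℝ) * pset G z Aᶜ) * (if z ∈ U then (1:ℝ) else 0))
        = ∑ z ∈ A, if z ∈ U then (G.degree z : ℝ) * pset G z Aᶜ else 0 from
      Finset.sum_congr rfl fun z _ => by split <;> simp]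
    rw [Finset.sum_ite_mem, Finset.inter_comm]
  rw [show (fun w : Fin (t+1) → Finset V => leakF G A (w (Fin.last t)))
      = fun w => ∑ z ∈ A, ((G.degree z : ℝ) * pset G z Aᶜ)
          * (if z ∈ w (Fin.last t) then (1:ℝ) else 0) from funext fun w => hleak _]
  rw [Epath_finsum]
  refine Finset.sum_congr rfl fun z _ => ?_
  unfold Ihit
  rw [← Epath_const_mul]

lemma sum_Dlk_le (A : Finset V) (t : ℕ) :
    ∑ x ∈ A, Dlk G A t {x} ≤ bdry G A / 2 := by
  have h1 : ∀ x ∈ A, Dlk G A t {x}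
      = ∑ z ∈ A, ((G.degree z : ℝ) * pset G z Aᶜ) * Ihit G z t {x} :=
    fun x _ => Dlk_rep G A t {x}
  rw [Finset.sum_congr rfl h1, Finset.sum_comm]
  have h2 : ∀ z ∈ A, (∑ x ∈ A, ((G.degree z : ℝ) * pset G z Aᶜ) * Ihit G z t {x})
      ≤ (G.degree z : ℝ) * pset G z Aᶜ := by
    intro z _
    rw [← Finset.mul_sum]
    calc ((G.degree z : ℝ) * pset G z Aᶜ) * ∑ x ∈ A, Ihit G z t {x}
        ≤ ((G.degree z : ℝ) * pset G z Aᶜ) * 1 := by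
          refine mul_le_mul_of_nonneg_left (sum_Ihit_le_one G z A t) ?_
          exact mul_nonneg (by positivity) (pset_nonneg G z Aᶜ)
      _ = (G.degree z : ℝ) * pset G z Aᶜ := mul_one _
  calc ∑ z ∈ A, ∑ x ∈ A, ((G.degree z : ℝ) * pset G z Aᶜ) * Ihit G z t {x}
      ≤ ∑ z ∈ A, (G.degree z : ℝ) * pset G z Aᶜ := Finset.sum_le_sum h2
    _ = bdry G A / 2 := sum_deg_pset_compl_self G A

end Escape


section Claims

variable (G : SimpleGraph V) [DecidableRel G.Adj]

/-- probability (under the volume-biased chain) of ever being `bad` within `t` steps. -/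
def NN (A : Finset V) (t : ℕ) (S : Finset V) : ℝ :=
  Epath (Khat G) S t (fun w => if ∃ j, badP G A (w j) then (1:ℝ) else 0)

lemma NN_le_one {A S : Finset V} (h : 0 < vol G S) (t : ℕ) : NN G A t S ≤ 1 :=
  Epath_khat_le_one G h t _ (fun w => by split <;> norm_num)

lemma NN_claim (A : Finset V) : ∀ (t : ℕ) (S : Finset V), 0 < vol G S →
    vol G S * NN G A t S ≤ 10 * Mst G A t S := by
  intro t
  induction t with
  | zero =>
    intro S hS
    unfold NN
    rw [Epath_zero]
    show vol G S * (if ∃ _j : Fin 1, badP G A S then (1:ℝ) else 0) ≤ 10 * vol G (S \ A)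
    by_cases hb : badP G A S
    · rw [if_pos ⟨0, hb⟩, mul_one]
      exact le_of_lt hb
    · rw [if_neg (by rintro ⟨_, hj⟩; exact hb hj), mul_zero]
      have := vol_nonneg G (S \ A)
      linarith
  | succ t ih =>
    intro S hS
    by_cases hb : badP G A S
    · have h1 : NN G A (t+1) S ≤ 1 := NN_le_one G hS (t+1)
      have h2 : Mst G A (t+1) S = vol G (S \ A) := by
        show (if badP G A S then _ else _) = _
        rw [if_pos hb]
      rw [h2]
      have h3 : 0 ≤ NN G A (t+1) S :=
        Epath_nonneg _ (khat_nonneg G) S (t+1) _ (fun w => by split <;> norm_num)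
      have hb' : vol G S < 10 * vol G (S \ A) := hb
      nlinarith [h1, h3, hS]
    · have hrec : NN G A (t+1) S = ∑ S' : Finset V, Khat G S S' * NN G A t S' := by
        unfold NN
        rw [Epath_cons]
        refine Finset.sum_congr rfl fun S' _ => ?_
        refine congrArg _ (congrArg _ (funext fun v => ?_))
        have hiff : (∃ j : Fin (t+2), badP G A ((Fin.cons S v : Fin (t+2) → Finset V) j))
            ↔ ∃ j : Fin (t+1), badP G A (v j) := by
          rw [Fin.exists_fin_succ]
          constructor
          · rintro (h0 | ⟨i, hi⟩)
            · exact absurd (by simpa using h0) hb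
            · exact ⟨i, by simpa [Fin.cons_succ] using hi⟩
          · rintro ⟨i, hi⟩
            exact Or.inr ⟨i, by simpa [Fin.cons_succ] using hi⟩
        exact if_congr hiff rfl rfl
      have h2 : Mst G A (t+1) S = ∑ S' : Finset V, Kk G S S' * Mst G A t S' := by
        show (if badP G A S then _ else _) = _
        rw [if_neg hb]
      rw [hrec, h2]
      have hterm : ∀ S' : Finset V,
          vol G S * (Khat G S S' * NN G A t S') ≤ Kk G S S' * (10 * Mst G A t S') := by
        intro S'
        by_cases h0 : vol G S' = 0
        · rw [khat_zero_of_vol_zero G h0, zero_mul, mul_zero]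
          exact mul_nonneg (kk_nonneg G S S')
            (mul_nonneg (by norm_num) (Mst_nonneg G A t S'))
        · have hpos : 0 < vol G S' := lt_of_le_of_ne (vol_nonneg G S') (Ne.symm h0)
          have he : vol G S * (Khat G S S' * NN G A t S')
              = Kk G S S' * (vol G S' * NN G A t S') := by
            unfold Khat
            have hv : vol G S ≠ 0 := ne_of_gt hS
            field_simp
          rw [he]
          exact mul_le_mul_of_nonneg_left (ih S' hpos) (kk_nonneg G S S')
      calc vol G S * ∑ S' : Finset V, Khat G S S' * NN G A t S'
          = ∑ S' : Finset V, vol G S * (Khat G S S' * NN G A t S') := Finset.mul_sum _ _ _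
        _ ≤ ∑ S' : Finset V, Kk G S S' * (10 * Mst G A t S') :=
            Finset.sum_le_sum fun S' _ => hterm S'
        _ = ∑ S' : Finset V, 10 * (Kk G S S' * Mst G A t S') :=
            Finset.sum_congr rfl fun S' _ => by ring
        _ = 10 * ∑ S' : Finset V, Kk G S S' * Mst G A t S' := (Finset.mul_sum _ _ _).symm

/-- the expectation `Ê[1_{all conductances ≥ 3θ} / √μ(S_t)]`. -/
def hitInv (θ : ℝ) (t : ℕ) (S : Finset V) : ℝ :=
  Epath (Khat G) S t (fun w =>
    (if ∀ j, 3*θ ≤ phiCond G (w j) then (1:ℝ) else 0)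
      * (Real.sqrt (vol G (w (Fin.last t))))⁻¹)

lemma hitInv_le (θ : ℝ) (hθ : 0 ≤ θ) (hθ1 : 3*θ ≤ 1) :
    ∀ (t : ℕ) (S : Finset V), 0 < vol G S →
      hitInv G θ t S ≤ (1 - (3*θ)^2/8)^t * (Real.sqrt (vol G S))⁻¹ := by
  have h3θ : 0 ≤ 3*θ := by linarith
  have hr0 : 0 ≤ 1 - (3*θ)^2/8 := by nlinarith
  intro t
  induction t with
  | zero =>
    intro S hS
    unfold hitInv
    rw [Epath_zero]
    show (if ∀ _j : Fin 1, 3*θ ≤ phiCond G S then (1:ℝ) else 0)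
        * (Real.sqrt (vol G S))⁻¹ ≤ _
    rw [pow_zero, one_mul]
    split
    · rw [one_mul]
    · rw [zero_mul]
      positivity
  | succ t ih =>
    intro S hS
    have hrec : hitInv G θ (t+1) S = (if 3*θ ≤ phiCond G S then (1:ℝ) else 0)
        * ∑ S' : Finset V, Khat G S S' * hitInv G θ t S' := by
      unfold hitInv
      rw [Epath_cons, Finset.mul_sum]
      refine Finset.sum_congr rfl fun S' _ => ?_
      beta_reduce
      have hsplit : ∀ v : Fin (t+1) → Finset V,
          ((if ∀ j : Fin (t+2), 3*θ ≤ phiCond G ((Fin.cons S v : Fin (t+2) → Finset V) j)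
              then (1:ℝ) else 0)
            * (Real.sqrt (vol G ((Fin.cons S v : Fin (t+2) → Finset V) (Fin.last (t+1)))))⁻¹)
          = (if 3*θ ≤ phiCond G S then (1:ℝ) else 0)
            * ((if ∀ j : Fin (t+1), 3*θ ≤ phiCond G (v j) then (1:ℝ) else 0)
              * (Real.sqrt (vol G (v (Fin.last t))))⁻¹) := by
        intro v
        have h1 : (∀ j : Fin (t+2), 3*θ ≤ phiCond G ((Fin.cons S v : Fin (t+2) → Finset V) j))
            ↔ (3*θ ≤ phiCond G S ∧ ∀ j : Fin (t+1), 3*θ ≤ phiCond G (v j)) := by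
          rw [Fin.forall_fin_succ]
          constructor
          · rintro ⟨h0, hs⟩
            exact ⟨by simpa using h0, fun j => by simpa [Fin.cons_succ] using hs j⟩
          · rintro ⟨h0, hs⟩
            exact ⟨by simpa using h0, fun j => by simpa [Fin.cons_succ] using hs j⟩
        have h2 : (Fin.cons S v : Fin (t+2) → Finset V) (Fin.last (t+1)) = v (Fin.last t) := by
          rw [← Fin.succ_last, Fin.cons_succ]
        have h3 : (if (3*θ ≤ phiCond G S ∧ ∀ j : Fin (t+1), 3*θ ≤ phiCond G (v j))
            then (1:ℝ) else 0)
            = (if 3*θ ≤ phiCond G S then (1:ℝ) else 0)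
              * (if ∀ j : Fin (t+1), 3*θ ≤ phiCond G (v j) then (1:ℝ) else 0) := by
          by_cases hP : 3*θ ≤ phiCond G S <;> by_cases hQ : ∀ j : Fin (t+1), 3*θ ≤ phiCond G (v j)
            <;> simp [hP, hQ]
        rw [h2, if_congr h1 rfl rfl, h3]
        ring
      have he := congrArg (Epath (Khat G) S' t) (funext hsplit)
      rw [he, Epath_const_mul]
      show Khat G S S' * (_ * Epath (Khat G) S' t _)
          = (if 3*θ ≤ phiCond G S then (1:ℝ) else 0) * (Khat G S S' * hitInv G θ t S')
      unfold hitInv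
      ring
    rw [hrec]
    by_cases hc : 3*θ ≤ phiCond G S
    · rw [if_pos hc, one_mul]
      have hterm : ∀ S' : Finset V, Khat G S S' * hitInv G θ t S'
          ≤ Khat G S S' * ((1 - (3*θ)^2/8)^t * (Real.sqrt (vol G S'))⁻¹) := by
        intro S'
        by_cases h0 : vol G S' = 0
        · rw [khat_zero_of_vol_zero G h0, zero_mul, zero_mul]
        · have hpos : 0 < vol G S' := lt_of_le_of_ne (vol_nonneg G S') (Ne.symm h0)
          exact mul_le_mul_of_nonneg_left (ih S' hpos) (khat_nonneg G S S')
      have hphi : (3*θ)^2 ≤ (phiCond G S)^2 := by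
        have := phi_nonneg G S
        nlinarith [hc]
      calc ∑ S' : Finset V, Khat G S S' * hitInv G θ t S'
          ≤ ∑ S' : Finset V, Khat G S S'
              * ((1 - (3*θ)^2/8)^t * (Real.sqrt (vol G S'))⁻¹) :=
            Finset.sum_le_sum fun S' _ => hterm S'
        _ = (1 - (3*θ)^2/8)^t
              * ∑ S' : Finset V, Khat G S S' * (Real.sqrt (vol G S'))⁻¹ := by
            rw [Finset.mul_sum]
            exact Finset.sum_congr rfl fun S' _ => by ring
        _ ≤ (1 - (3*θ)^2/8)^t
              * ((1 - (phiCond G S)^2/8) * (Real.sqrt (vol G S))⁻¹) := by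
            refine mul_le_mul_of_nonneg_left (sum_khat_invsqrt G hS) (pow_nonneg hr0 t)
        _ ≤ (1 - (3*θ)^2/8)^t
              * ((1 - (3*θ)^2/8) * (Real.sqrt (vol G S))⁻¹) := by
            refine mul_le_mul_of_nonneg_left ?_ (pow_nonneg hr0 t)
            refine mul_le_mul_of_nonneg_right (by nlinarith [hphi]) ?_
            positivity
        _ = (1 - (3*θ)^2/8)^(t+1) * (Real.sqrt (vol G S))⁻¹ := by ring
    · rw [if_neg hc, zero_mul]
      positivity

end Claims


section Final

variable (G : SimpleGraph V) [DecidableRel G.Adj]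

lemma Epath_fun_zero (κ : Finset V → Finset V → ℝ) (S₀ : Finset V) (t : ℕ) :
    Epath κ S₀ t (fun _ => (0:ℝ)) = 0 := by
  unfold Epath
  refine Finset.sum_eq_zero fun w _ => ?_
  split <;> simp

lemma P1_zero_case {θ : ℝ} (hθbig : 1 < 3*θ) {x : V} (h : 0 < vol G {x}) (T : ℕ) :
    Epath (Khat G) {x} T (fun w => if ∀ j, 3*θ ≤ phiCond G (w j) then (1:ℝ) else 0) = 0 := by
  rw [Epath_khat_support G h T]
  have hfun : (fun w : Fin (T+1) → Finset V =>
      if ∀ j, 0 < vol G (w j) then (if ∀ j, 3*θ ≤ phiCond G (w j) then (1:ℝ) else 0) else 0)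
      = fun _ => (0:ℝ) := by
    funext w
    by_cases hp : ∀ j, 0 < vol G (w j)
    · rw [if_pos hp, if_neg]
      intro hall
      have h1 := hall 0
      have h2 := phi_le_one (G := G) (hp 0)
      linarith
    · rw [if_neg hp]
  rw [hfun, Epath_fun_zero]

lemma P1_le_main {θ : ℝ} {x : V} (h : 0 < vol G {x}) (T : ℕ) :
    Epath (Khat G) {x} T (fun w => if ∀ j, 3*θ ≤ phiCond G (w j) then (1:ℝ) else 0)
      ≤ Real.sqrt (vol G Finset.univ) * hitInv G θ T {x} := by
  rw [Epath_khat_support G h T]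
  unfold hitInv
  conv_rhs => rw [Epath_khat_support G h T]
  rw [← Epath_const_mul]
  refine Epath_mono _ (khat_nonneg G) _ _ _ _ (fun w => ?_)
  by_cases hp : ∀ j, 0 < vol G (w j)
  · simp only [if_pos hp]
    by_cases hi : ∀ j, 3*θ ≤ phiCond G (w j)
    · simp only [if_pos hi, one_mul]
      have h1 : 0 < vol G (w (Fin.last T)) := hp _
      have h2 : vol G (w (Fin.last T)) ≤ vol G Finset.univ :=
        vol_mono (Finset.subset_univ _)
      have h3 : Real.sqrt (vol G (w (Fin.last T))) ≤ Real.sqrt (vol G Finset.univ) :=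
        Real.sqrt_le_sqrt h2
      have h4 : 0 < Real.sqrt (vol G (w (Fin.last T))) := Real.sqrt_pos.2 h1
      rw [show Real.sqrt (vol G Finset.univ) * (Real.sqrt (vol G (w (Fin.last T))))⁻¹
          = Real.sqrt (vol G Finset.univ) / Real.sqrt (vol G (w (Fin.last T))) from
        (div_eq_mul_inv _ _).symm]
      rw [le_div_iff₀ h4, one_mul]
      exact h3
    · simp only [if_neg hi, zero_mul, mul_zero]
      exact le_refl 0
  · simp only [if_neg hp, mul_zero]
    exact le_refl 0

lemma rT_bound {θ m : ℝ} {T : ℕ} (hT : 0 < T) (hm : 4 ≤ m)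
    (hθ : θ = Real.sqrt (4 * Real.log m / T)) (h1 : 3*θ ≤ 1) :
    Real.sqrt m * (1 - (3*θ)^2/8)^T ≤ 1/256 := by
  have hm0 : (0:ℝ) < m := by linarith
  have hlog : 0 ≤ Real.log m := Real.log_nonneg (by linarith)
  have hTpos : (0:ℝ) < (T:ℝ) := by exact_mod_cast hT
  have hθ0 : 0 ≤ θ := hθ ▸ Real.sqrt_nonneg _
  have hθ2 : θ^2 = 4 * Real.log m / T := by
    rw [hθ]
    exact Real.sq_sqrt (by positivity)
  set a := (3*θ)^2/8 with ha
  have ha0 : 0 ≤ a := by positivity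
  have key : (1 - a)^T ≤ Real.exp (-(a * T)) := by
    have h2 : 1 - a ≤ Real.exp (-a) := by
      have := Real.add_one_le_exp (-a)
      linarith
    have h3 : (0:ℝ) ≤ 1 - a := by nlinarith [h1, hθ0]
    calc (1-a)^T ≤ (Real.exp (-a))^T := pow_le_pow_left₀ h3 h2 T
      _ = Real.exp (-(a * T)) := by
          rw [← Real.exp_nat_mul]
          congr 1
          ring
  have haT : a * T = 9/2 * Real.log m := by
    rw [ha, show (3*θ)^2 = 9 * θ^2 by ring, hθ2]
    field_simp
    ring
  have hexp : Real.exp (9/2 * Real.log m) = m^4 * Real.sqrt m := by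
    have h4 : Real.exp (4 * Real.log m) = m^4 := by
      rw [show (4:ℝ) * Real.log m = ((4:ℕ):ℝ) * Real.log m by norm_num,
        Real.exp_nat_mul, Real.exp_log hm0]
    have hhalf : Real.exp (Real.log m / 2) = Real.sqrt m := by
      rw [← Real.log_sqrt (le_of_lt hm0), Real.exp_log (Real.sqrt_pos.2 hm0)]
    calc Real.exp (9/2 * Real.log m)
        = Real.exp (4 * Real.log m + Real.log m / 2) := by ring_nf
      _ = m^4 * Real.sqrt m := by rw [Real.exp_add, h4, hhalf]
  have hs0 : 0 < Real.sqrt m := Real.sqrt_pos.2 hm0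
  calc Real.sqrt m * (1-a)^T ≤ Real.sqrt m * Real.exp (-(a*T)) :=
        mul_le_mul_of_nonneg_left key (Real.sqrt_nonneg m)
    _ = Real.sqrt m / (m^4 * Real.sqrt m) := by
        rw [haT, Real.exp_neg, hexp]
        rw [div_eq_mul_inv]
    _ = 1/m^4 := by
        rw [div_eq_div_iff (by positivity) (by positivity)]
        ring
    _ ≤ 1/256 := by
        have h2 : (16:ℝ) ≤ m^2 := by nlinarith [hm]
        have h4 : (256:ℝ) ≤ m^4 := by nlinarith [h2]
        rw [div_le_div_iff₀ (by positivity) (by norm_num)]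
        nlinarith [h4]

lemma four_le_volU (A : Finset V) (T : ℕ) (hT : 0 < T)
    (hvol : vol G A ≤ 2/3 * vol G Finset.univ)
    (hcond : phiCond G A ≤ 1 / (100 * T)) (hA : 0 < vol G A) :
    4 ≤ vol G Finset.univ := by
  by_contra hlt
  push_neg at hlt
  -- boundary is an integer-valued quantity below 1, hence 0
  have hT1 : (1:ℝ) ≤ (T:ℝ) := by exact_mod_cast hT
  have hb : bdry G A ≤ vol G A / (100 * T) := by
    have h0 : bdry G A / vol G A ≤ 1 / (100*T) := hcond
    rw [div_le_div_iff₀ hA (by positivity)] at h0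
    rw [le_div_iff₀ (by positivity)]
    linarith
  have hb1 : bdry G A < 1 := by
    have h2 : vol G A ≤ 2/3 * vol G Finset.univ := hvol
    have h3 : vol G A / (100 * T) ≤ vol G A / 100 := by
      apply div_le_div_of_nonneg_left (le_of_lt hA) (by norm_num)
      nlinarith [hT1]
    nlinarith [hb, h3, hlt, hA]
  have hbN : bdry G A = 0 := by
    unfold bdry at hb1 ⊢
    have hcast : (∑ x ∈ A, ((Aᶜ.filter (G.Adj x)).card : ℝ))
        = ((∑ x ∈ A, (Aᶜ.filter (G.Adj x)).card : ℕ) : ℝ) := by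
      rw [Nat.cast_sum]
    rw [hcast] at hb1 ⊢
    have : (∑ x ∈ A, (Aᶜ.filter (G.Adj x)).card) = 0 := by
      by_contra hne
      have : 1 ≤ ∑ x ∈ A, (Aᶜ.filter (G.Adj x)).card := Nat.one_le_iff_ne_zero.2 hne
      have : (1:ℝ) ≤ ((∑ x ∈ A, (Aᶜ.filter (G.Adj x)).card : ℕ) : ℝ) := by exact_mod_cast this
      linarith
    rw [this]
    norm_num
  -- get a positive-degree vertex in A
  obtain ⟨x, hxA, hdx⟩ : ∃ x ∈ A, 0 < G.degree x := by
    by_contra hno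
    push_neg at hno
    have : vol G A = 0 := by
      unfold vol
      refine Finset.sum_eq_zero fun x hx => ?_
      have := hno x hx
      norm_num at this ⊢
      omega
    linarith
  obtain ⟨y, hady⟩ := (G.degree_pos_iff_exists_adj x).1 hdx
  -- y must be in A since the boundary vanishes
  have hyA : y ∈ A := by
    by_contra hyn
    have hterm : ∀ z ∈ A, (0:ℝ) ≤ ((Aᶜ.filter (G.Adj z)).card : ℝ) := fun z _ => by positivity
    have hx1 : (1:ℝ) ≤ ((Aᶜ.filter (G.Adj x)).card : ℝ) := by
      have : y ∈ Aᶜ.filter (G.Adj x) := by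
        rw [Finset.mem_filter, Finset.mem_compl]
        exact ⟨hyn, hady⟩
      have : 1 ≤ (Aᶜ.filter (G.Adj x)).card := Finset.card_pos.2 ⟨y, this⟩
      exact_mod_cast this
    have : (1:ℝ) ≤ bdry G A := by
      unfold bdry
      calc (1:ℝ) ≤ ((Aᶜ.filter (G.Adj x)).card : ℝ) := hx1
        _ ≤ ∑ z ∈ A, ((Aᶜ.filter (G.Adj z)).card : ℝ) :=
            Finset.single_le_sum hterm hxA
    rw [hbN] at this
    linarith
  have hxy : x ≠ y := fun he => G.irrefl (he ▸ hady)
  have hdy : 0 < G.degree y := (G.degree_pos_iff_exists_adj y).2 ⟨x, hady.symm⟩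
  have hpair : (2:ℝ) ≤ vol G A := by
    have hsub : ({x, y} : Finset V) ⊆ A := by
      intro z hz
      rw [Finset.mem_insert, Finset.mem_singleton] at hz
      rcases hz with rfl | rfl
      · exact hxA
      · exact hyA
    have h2 : vol G {x, y} = (G.degree x : ℝ) + G.degree y := by
      unfold vol
      rw [Finset.sum_pair hxy]
    have h3 : (2:ℝ) ≤ vol G {x, y} := by
      rw [h2]
      have hx1 : (1:ℝ) ≤ G.degree x := by exact_mod_cast hdx
      have hy1 : (1:ℝ) ≤ G.degree y := by exact_mod_cast hdy
      linarith
    exact h3.trans (vol_mono hsub)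
  -- parity: the total volume is twice the edge count
  have heven : vol G Finset.univ = 2 * (G.edgeFinset.card : ℝ) := by
    unfold vol
    have := SimpleGraph.sum_degrees_eq_twice_card_edges G
    have hcast : (∑ v : V, (G.degree v : ℝ)) = ((∑ v : V, G.degree v : ℕ) : ℝ) := by
      rw [Nat.cast_sum]
    rw [hcast, this]
    push_cast
    ring
  have h3' : (3:ℝ) ≤ vol G Finset.univ := by nlinarith [hpair, hvol]
  have hcard : (3:ℝ) ≤ 2 * (G.edgeFinset.card : ℝ) := by
    rw [← heven]
    exact h3'
  have h2c : 2 ≤ G.edgeFinset.card := by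
    by_contra hc
    push_neg at hc
    have : (G.edgeFinset.card : ℝ) ≤ 1 := by exact_mod_cast Nat.lt_succ_iff.1 hc
    linarith
  have h4c : (4:ℝ) ≤ 2 * (G.edgeFinset.card : ℝ) := by
    have : (2:ℝ) ≤ (G.edgeFinset.card : ℝ) := by exact_mod_cast h2c
    linarith
  rw [← heven] at h4c
  linarith

end Final


section MainProof

lemma Epath_add (κ : Finset V → Finset V → ℝ) (S₀ : Finset V) (t : ℕ)
    (f g : (Fin (t+1) → Finset V) → ℝ) :
    Epath κ S₀ t (fun w => f w + g w) = Epath κ S₀ t f + Epath κ S₀ t g := by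
  unfold Epath
  rw [← Finset.sum_add_distrib]
  refine Finset.sum_congr rfl fun w _ => ?_
  split <;> ring

set_option maxHeartbeats 2000000 in
theorem main (G : SimpleGraph V) [DecidableRel G.Adj]
    (T : ℕ) (hT : 0 < T) (A : Finset V)
    (hvol : vol G A ≤ 2/3 * vol G Finset.univ)
    (hcond : phiCond G A ≤ 1 / (100 * T)) :
    ∃ AT : Finset V, AT ⊆ A ∧ vol G A / 2 ≤ vol G AT ∧
      ∀ x ∈ AT,
        (7:ℝ)/9 ≤ Epath (Khat G) {x} T fun w =>
          if (∃ t : Fin (T+1),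
                phiCond G (w t) < 3 * Real.sqrt (4 * Real.log (vol G Finset.univ) / T)) ∧
             (∀ j : Fin (T+1), vol G (w j) ≤ 3/4 * vol G Finset.univ) ∧
             (∀ j : Fin (T+1), 9/10 * vol G (w j) ≤ vol G (w j ∩ A))
          then 1 else 0 := by
  by_cases hA0 : vol G A ≤ 0
  · refine ⟨∅, Finset.empty_subset A, ?_, fun x hx => absurd hx (Finset.notMem_empty x)⟩
    rw [vol_empty]
    linarith
  push_neg at hA0
  set θ : ℝ := Real.sqrt (4 * Real.log (vol G Finset.univ) / T) with hθdef
  have hθ0 : 0 ≤ θ := Real.sqrt_nonneg _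
  have hU4 : (4:ℝ) ≤ vol G Finset.univ := four_le_volU G A T hT hvol hcond hA0
  have hU0 : 0 < vol G Finset.univ := by linarith
  have hT1 : (1:ℝ) ≤ (T:ℝ) := by exact_mod_cast hT
  set P1 : V → ℝ := fun x => Epath (Khat G) {x} T
    (fun w => if ∀ j, 3*θ ≤ phiCond G (w j) then (1:ℝ) else 0) with hP1def
  set P3 : V → ℝ := fun x => NN G A T {x} with hP3def
  have hP1nn : ∀ x, 0 ≤ P1 x := fun x =>
    Epath_nonneg _ (khat_nonneg G) _ T _ (fun w => by split <;> norm_num)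
  have hP3nn : ∀ x, 0 ≤ P3 x := fun x =>
    Epath_nonneg _ (khat_nonneg G) _ T _ (fun w => by split <;> norm_num)
  -- per-vertex bound on P1
  have hP1 : ∀ x : V, 0 < G.degree x → P1 x ≤ 1/256 := by
    intro x hdx
    have hvx : 0 < vol G {x} := by
      rw [vol_singleton]
      exact_mod_cast hdx
    by_cases hbig : 1 < 3*θ
    · have hz : P1 x = 0 := by
        rw [hP1def]
        exact P1_zero_case G hbig hvx T
      rw [hz]
      norm_num
    · push_neg at hbig
      have h1 : P1 x ≤ Real.sqrt (vol G Finset.univ) * hitInv G θ T {x} :=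
        P1_le_main G hvx T
      have h2 : hitInv G θ T {x} ≤ (1 - (3*θ)^2/8)^T * (Real.sqrt (vol G {x}))⁻¹ :=
        hitInv_le G θ hθ0 hbig T {x} hvx
      have hr0 : (0:ℝ) ≤ 1 - (3*θ)^2/8 := by nlinarith [hθ0, hbig]
      have h3 : (Real.sqrt (vol G {x}))⁻¹ ≤ 1 := by
        have hd1 : (1:ℝ) ≤ vol G {x} := by
          rw [vol_singleton]
          exact_mod_cast hdx
        have hs : 1 ≤ Real.sqrt (vol G {x}) :=
          (Real.le_sqrt (by norm_num) (le_of_lt hvx)).2 (by nlinarith [hd1])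
        exact inv_le_one_of_one_le₀ hs
      have h4 : Real.sqrt (vol G Finset.univ) * (1 - (3*θ)^2/8)^T ≤ 1/256 :=
        rT_bound hT hU4 hθdef hbig
      have h5 : Real.sqrt (vol G Finset.univ) * hitInv G θ T {x}
          ≤ (Real.sqrt (vol G Finset.univ) * (1 - (3*θ)^2/8)^T)
            * (Real.sqrt (vol G {x}))⁻¹ := by
        calc Real.sqrt (vol G Finset.univ) * hitInv G θ T {x}
            ≤ Real.sqrt (vol G Finset.univ)
                * ((1 - (3*θ)^2/8)^T * (Real.sqrt (vol G {x}))⁻¹) :=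
              mul_le_mul_of_nonneg_left h2 (Real.sqrt_nonneg _)
          _ = (Real.sqrt (vol G Finset.univ) * (1 - (3*θ)^2/8)^T)
                * (Real.sqrt (vol G {x}))⁻¹ := by ring
      have h6 : (Real.sqrt (vol G Finset.univ) * (1 - (3*θ)^2/8)^T)
          * (Real.sqrt (vol G {x}))⁻¹ ≤ 1/256 := by
        have hnn : 0 ≤ Real.sqrt (vol G Finset.univ) * (1 - (3*θ)^2/8)^T := by positivity
        calc (Real.sqrt (vol G Finset.univ) * (1 - (3*θ)^2/8)^T)
              * (Real.sqrt (vol G {x}))⁻¹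
            ≤ (Real.sqrt (vol G Finset.univ) * (1 - (3*θ)^2/8)^T) * 1 :=
              mul_le_mul_of_nonneg_left h3 hnn
          _ ≤ 1/256 := by rw [mul_one]; exact h4
      linarith [h1, h5, h6]
  -- boundary bound
  have hbdryA : bdry G A ≤ vol G A / (100 * T) := by
    have h0 : bdry G A / vol G A ≤ 1 / (100*T) := hcond
    rw [div_le_div_iff₀ hA0 (by positivity)] at h0
    rw [le_div_iff₀ (by positivity)]
    linarith
  -- aggregated bound on P3
  have hP3sum : ∑ x ∈ A, (G.degree x : ℝ) * P3 x ≤ vol G A / 20 := by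
    have hstep : ∀ x ∈ A, (G.degree x : ℝ) * P3 x ≤ 10 * Mst G A T {x} := by
      intro x hxA
      by_cases hdx : 0 < G.degree x
      · have hvx : 0 < vol G {x} := by
          rw [vol_singleton]; exact_mod_cast hdx
        have hcl := NN_claim G A T {x} hvx
        rw [vol_singleton] at hcl
        rw [hP3def]
        exact hcl
      · have h0 : G.degree x = 0 := Nat.eq_zero_of_not_pos hdx
        rw [h0]
        push_cast
        rw [zero_mul]
        exact mul_nonneg (by norm_num) (Mst_nonneg G A T {x})
    have hMst : ∀ x ∈ A, Mst G A T {x} ≤ ∑ t ∈ Finset.range T, Dlk G A t {x} := by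
      intro x hxA
      have h0 : Mst G A 0 {x} = 0 := by
        show vol G ({x} \ A) = 0
        rw [Finset.sdiff_eq_empty_iff_subset.2 (Finset.singleton_subset_iff.2 hxA)]
        exact vol_empty G
      have := Mst_le_sum_Dlk G A T {x}
      rw [h0] at this
      linarith
    calc ∑ x ∈ A, (G.degree x : ℝ) * P3 x
        ≤ ∑ x ∈ A, 10 * Mst G A T {x} := Finset.sum_le_sum hstep
      _ ≤ ∑ x ∈ A, 10 * ∑ t ∈ Finset.range T, Dlk G A t {x} := by
          refine Finset.sum_le_sum fun x hx => ?_
          have := hMst x hx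
          linarith
      _ = 10 * ∑ t ∈ Finset.range T, ∑ x ∈ A, Dlk G A t {x} := by
          rw [← Finset.mul_sum, Finset.sum_comm]
      _ ≤ 10 * ∑ t ∈ Finset.range T, bdry G A / 2 := by
          refine mul_le_mul_of_nonneg_left ?_ (by norm_num)
          exact Finset.sum_le_sum fun t _ => sum_Dlk_le G A t
      _ = 5 * T * bdry G A := by
          rw [Finset.sum_const, Finset.card_range]
          push_cast
          ring
      _ ≤ 5 * T * (vol G A / (100 * T)) := by
          refine mul_le_mul_of_nonneg_left hbdryA (by positivity)
      _ = vol G A / 20 := by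
          have hTne : (T:ℝ) ≠ 0 := by positivity
          field_simp
          ring
  -- Markov argument
  refine ⟨A.filter (fun x => 0 < G.degree x ∧ P1 x + P3 x ≤ 2/9),
    Finset.filter_subset _ A, ?_, ?_⟩
  · have hsplit : vol G (A.filter (fun x => 0 < G.degree x ∧ P1 x + P3 x ≤ 2/9))
        + vol G (A.filter (fun x => ¬(0 < G.degree x ∧ P1 x + P3 x ≤ 2/9))) = vol G A :=
      Finset.sum_filter_add_sum_filter_not A _ _
    have hB : vol G (A.filter (fun x => ¬(0 < G.degree x ∧ P1 x + P3 x ≤ 2/9)))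
        ≤ (9/2) * ∑ x ∈ A, (G.degree x : ℝ) * (P1 x + P3 x) := by
      have hterm : ∀ x ∈ A.filter (fun x => ¬(0 < G.degree x ∧ P1 x + P3 x ≤ 2/9)),
          (G.degree x : ℝ) ≤ (9/2) * ((G.degree x : ℝ) * (P1 x + P3 x)) := by
        intro x hxB
        rw [Finset.mem_filter] at hxB
        obtain ⟨hxA, hnot⟩ := hxB
        by_cases hdx : 0 < G.degree x
        · have h29 : 2/9 < P1 x + P3 x := by
            by_contra hle
            push_neg at hle
            exact hnot ⟨hdx, hle⟩
          have hd1 : (0:ℝ) < G.degree x := by exact_mod_cast hdx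
          nlinarith [h29, hd1]
        · have h0 : (G.degree x : ℝ) = 0 := by
            have := Nat.eq_zero_of_not_pos hdx
            exact_mod_cast this
          rw [h0]
          simp
      calc vol G (A.filter (fun x => ¬(0 < G.degree x ∧ P1 x + P3 x ≤ 2/9)))
          ≤ ∑ x ∈ A.filter (fun x => ¬(0 < G.degree x ∧ P1 x + P3 x ≤ 2/9)),
              (9/2) * ((G.degree x : ℝ) * (P1 x + P3 x)) := Finset.sum_le_sum hterm
        _ ≤ ∑ x ∈ A, (9/2) * ((G.degree x : ℝ) * (P1 x + P3 x)) := by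
            refine Finset.sum_le_sum_of_subset_of_nonneg (Finset.filter_subset _ A) ?_
            intro x _ _
            have := hP1nn x
            have := hP3nn x
            positivity
        _ = (9/2) * ∑ x ∈ A, (G.degree x : ℝ) * (P1 x + P3 x) := by
            rw [Finset.mul_sum]
    have hsum : ∑ x ∈ A, (G.degree x : ℝ) * (P1 x + P3 x)
        ≤ vol G A * (1/256) + vol G A / 20 := by
      have hsplit2 : ∑ x ∈ A, (G.degree x : ℝ) * (P1 x + P3 x)
          = (∑ x ∈ A, (G.degree x : ℝ) * P1 x) + ∑ x ∈ A, (G.degree x : ℝ) * P3 x := by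
        rw [← Finset.sum_add_distrib]
        exact Finset.sum_congr rfl fun x _ => by ring
      have hP1sum : ∑ x ∈ A, (G.degree x : ℝ) * P1 x ≤ vol G A * (1/256) := by
        have : ∀ x ∈ A, (G.degree x : ℝ) * P1 x ≤ (G.degree x : ℝ) * (1/256) := by
          intro x _
          by_cases hdx : 0 < G.degree x
          · exact mul_le_mul_of_nonneg_left (hP1 x hdx) (by positivity)
          · have h0 : (G.degree x : ℝ) = 0 := by
              have := Nat.eq_zero_of_not_pos hdx
              exact_mod_cast this
            rw [h0]
            simp
        calc ∑ x ∈ A, (G.degree x : ℝ) * P1 x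
            ≤ ∑ x ∈ A, (G.degree x : ℝ) * (1/256) := Finset.sum_le_sum this
          _ = vol G A * (1/256) := by
              rw [← Finset.sum_mul]
              rfl
      rw [hsplit2]
      linarith [hP1sum, hP3sum]
    have hfinal : (9:ℝ)/2 * (vol G A * (1/256) + vol G A / 20) ≤ vol G A / 2 := by
      nlinarith [hA0]
    linarith [hsplit, hB, hsum, hfinal]
  · intro x hx
    rw [Finset.mem_filter] at hx
    obtain ⟨hxA, hdx, hP⟩ := hx
    have hvx : 0 < vol G {x} := by
      rw [vol_singleton]; exact_mod_cast hdx
    have hpoint : ∀ w : Fin (T+1) → Finset V,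
        1 - ((if ∀ j, 3*θ ≤ phiCond G (w j) then (1:ℝ) else 0)
            + (if ∃ j, badP G A (w j) then (1:ℝ) else 0))
        ≤ (if (∃ t : Fin (T+1), phiCond G (w t) < 3 * θ) ∧
             (∀ j : Fin (T+1), vol G (w j) ≤ 3/4 * vol G Finset.univ) ∧
             (∀ j : Fin (T+1), 9/10 * vol G (w j) ≤ vol G (w j ∩ A))
          then (1:ℝ) else 0) := by
      intro w
      have hf1nn : (0:ℝ) ≤ (if ∀ j, 3*θ ≤ phiCond G (w j) then (1:ℝ) else 0) := by
        split <;> norm_num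
      have hf3nn : (0:ℝ) ≤ (if ∃ j, badP G A (w j) then (1:ℝ) else 0) := by
        split <;> norm_num
      by_cases hE : (∃ t : Fin (T+1), phiCond G (w t) < 3 * θ) ∧
          (∀ j : Fin (T+1), vol G (w j) ≤ 3/4 * vol G Finset.univ) ∧
          (∀ j : Fin (T+1), 9/10 * vol G (w j) ≤ vol G (w j ∩ A))
      · rw [if_pos hE]
        linarith
      · rw [if_neg hE]
        have key : (∀ j, 3*θ ≤ phiCond G (w j)) ∨ (∃ j, badP G A (w j)) := by
          by_contra hk
          push_neg at hk
          obtain ⟨hk1, hk2⟩ := hk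
          apply hE
          refine ⟨?_, ?_, ?_⟩
          · obtain ⟨j, hj⟩ := hk1
            exact ⟨j, by linarith [hj]⟩
          · intro j
            by_contra hbigv
            push_neg at hbigv
            have hnb := hk2 j
            unfold badP at hnb
            push_neg at hnb
            have hsplitv := vol_inter_add_sdiff (G := G) (w j) A
            have hIA : vol G (w j ∩ A) ≤ vol G A :=
              vol_mono Finset.inter_subset_right
            nlinarith [hnb, hsplitv, hIA, hbigv, hvol, hU0]
          · intro j
            have hnb := hk2 j
            unfold badP at hnb
            push_neg at hnb
            have hsplitv := vol_inter_add_sdiff (G := G) (w j) A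
            linarith
        rcases key with hk | hk
        · rw [if_pos hk]
          linarith
        · rw [if_pos hk]
          linarith
    have hm : Epath (Khat G) {x} T (fun w =>
        1 - ((if ∀ j, 3*θ ≤ phiCond G (w j) then (1:ℝ) else 0)
            + (if ∃ j, badP G A (w j) then (1:ℝ) else 0)))
        ≤ Epath (Khat G) {x} T (fun w =>
          if (∃ t : Fin (T+1), phiCond G (w t) < 3 * θ) ∧
             (∀ j : Fin (T+1), vol G (w j) ≤ 3/4 * vol G Finset.univ) ∧
             (∀ j : Fin (T+1), 9/10 * vol G (w j) ≤ vol G (w j ∩ A))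
          then (1:ℝ) else 0) :=
      Epath_mono (Khat G) (khat_nonneg G) {x} T _ _ hpoint
    have hsub : Epath (Khat G) {x} T (fun w =>
        1 - ((if ∀ j, 3*θ ≤ phiCond G (w j) then (1:ℝ) else 0)
            + (if ∃ j, badP G A (w j) then (1:ℝ) else 0)))
        = Epath (Khat G) {x} T (fun _ => 1)
          - Epath (Khat G) {x} T (fun w =>
              (if ∀ j, 3*θ ≤ phiCond G (w j) then (1:ℝ) else 0)
              + (if ∃ j, badP G A (w j) then (1:ℝ) else 0)) :=
      Epath_sub (Khat G) {x} T _ _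
    have hadd : Epath (Khat G) {x} T (fun w =>
        (if ∀ j, 3*θ ≤ phiCond G (w j) then (1:ℝ) else 0)
        + (if ∃ j, badP G A (w j) then (1:ℝ) else 0))
        = P1 x + P3 x :=
      Epath_add (Khat G) {x} T _ _
    have hone : Epath (Khat G) {x} T (fun _ => (1:ℝ)) = 1 := Epath_khat_one G hvx T
    have hP1x : Epath (Khat G) {x} T (fun w =>
        if ∀ j, 3*θ ≤ phiCond G (w j) then (1:ℝ) else 0) = P1 x := rfl
    have hP3x : Epath (Khat G) {x} T (fun w =>
        if ∃ j, badP G A (w j) then (1:ℝ) else 0) = P3 x := rfl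
    linarith [hm, hsub, hadd, hone, hP, hP1x, hP3x]

end MainProof

end ESP

/-- Theorem (local partitioning via the volume-biased ESP): fix a positive integer `T`
and a set `A` with `μ(A) ≤ (2/3) μ(V)` and `φ(A) ≤ 1/(100 T)`. Then there is a subset
`A_T ⊆ A` of volume at least `μ(A)/2` such that for every `x ∈ A_T`, with probability
at least `7/9` a sample path `(S₀, …, S_T)` of the volume-biased ESP started from
`S₀ = {x}` satisfies: (1) `φ(S_t) < 3θ_T` for some `t ≤ T`, where
`θ_T = √(4 T⁻¹ log μ(V))`; (2) `μ(S_j) ≤ (3/4) μ(V)` for all `j ≤ T`; and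
(3) `μ(S_j ∩ A) ≥ (9/10) μ(S_j)` for all `j ≤ T`. -/
theorem statement14 (G : SimpleGraph V) [DecidableRel G.Adj]
    (T : ℕ) (hT : 0 < T) (A : Finset V)
    (hvol : vol G A ≤ 2/3 * vol G Finset.univ)
    (hcond : phiCond G A ≤ 1 / (100 * T)) :
    ∃ AT : Finset V, AT ⊆ A ∧ vol G A / 2 ≤ vol G AT ∧
      ∀ x ∈ AT,
        (7:ℝ)/9 ≤ Epath (Khat G) {x} T fun w =>
          if (∃ t : Fin (T+1),
                phiCond G (w t) < 3 * Real.sqrt (4 * Real.log (vol G Finset.univ) / T)) ∧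
             (∀ j : Fin (T+1), vol G (w j) ≤ 3/4 * vol G Finset.univ) ∧
             (∀ j : Fin (T+1), 9/10 * vol G (w j) ≤ vol G (w j ∩ A))
          then 1 else 0 :=
  ESP.main G T hT A hvol hcond
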